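/- arXiv:2304.08712 — 4 statements merged into one kernel-verified Lean document; each statement's English description precedes it below -/
import Mathlib

section
/- Suppose C is a family of classes with sample complexity functions m_Q : ℕ → ℕ such that {m_Q : Q ∈ C} is cofinal in (ℕ^ℕ, eventual dominance). Then there is no function d : C → ℝ and f : ℝ × ℕ → ℕ with m_Q(k) ≤ f(d(Q), k) for all Q, k, such that f is monotone in its first argument under eventual dominance (i.e. d(Q₁) ≥ d(Q₂) implies f(d(Q₂), ·) ≤_ed f(d(Q₁), ·)). -/
/-- `g` is eventually dominated by `f`. -/
def EvDom (g f : ℕ → ℕ) : Prop := ∃ N : ℕ, ∀ n ≥ N, g n ≤ f n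

/-- If the sample complexity functions `m Q` of the learnable classes `Q : C`
are cofinal in `(ℕ → ℕ, ≤ₑₐ)`, then there is no real-valued dimension `d` with a
bounding function `f` satisfying `m Q k ≤ f (d Q) k` that is monotone in the
dimension under eventual dominance. -/
theorem no_monotone_real_valued_dimension {C : Type*} (m : C → ℕ → ℕ)
    (hcof : ∀ g : ℕ → ℕ, ∃ Q : C, EvDom g (m Q)) :
    ¬ ∃ (d : C → ℝ) (f : ℝ → ℕ → ℕ),
        (∀ (Q : C) (k : ℕ), m Q k ≤ f (d Q) k) ∧
        (∀ Q₁ Q₂ : C, d Q₂ ≤ d Q₁ → EvDom (f (d Q₂)) (f (d Q₁))) := by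
  rintro ⟨d, f, hbound, hmono⟩
  -- Step 1: a countable cofinal sequence in the image of `d`.
  have key : ∃ a : ℕ → C, ∀ P : C, ∃ n, d P ≤ d (a n) := by
    by_cases hmax : ∃ Q : C, ∀ P : C, d P ≤ d Q
    · obtain ⟨Q, hQ⟩ := hmax
      exact ⟨fun _ => Q, fun P => ⟨0, hQ P⟩⟩
    · push_neg at hmax
      by_cases hbdd : BddAbove (Set.range d)
      · have hne : (Set.range d).Nonempty := ⟨d (hcof 0).choose, Set.mem_range_self _⟩
        obtain ⟨u, hu_mono, hu_tendsto, hu_mem⟩ := exists_seq_tendsto_sSup hne hbdd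
        choose a ha using fun n => hu_mem n
        refine ⟨a, fun P => ?_⟩
        obtain ⟨P', hP'⟩ := hmax P
        have hlt : d P < sSup (Set.range d) :=
          lt_of_lt_of_le hP' (le_csSup hbdd (Set.mem_range_self _))
        obtain ⟨n, hn⟩ := (hu_tendsto.eventually (eventually_gt_nhds hlt)).exists
        exact ⟨n, by rw [ha n]; exact hn.le⟩
      · rw [not_bddAbove_iff] at hbdd
        have h : ∀ n : ℕ, ∃ Q : C, (n : ℝ) < d Q := by
          intro n
          obtain ⟨y, ⟨Q, hQ⟩, hy⟩ := hbdd (n : ℝ)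
          exact ⟨Q, hQ ▸ hy⟩
        choose a ha using h
        refine ⟨a, fun P => ⟨⌈d P⌉₊, ?_⟩⟩
        exact le_trans (Nat.le_ceil _) (ha _).le
  obtain ⟨a, ha⟩ := key
  -- Step 2: diagonalize.
  set g : ℕ → ℕ := fun n => 1 + (Finset.range (n + 1)).sup (fun j => f (d (a j)) n) with hg
  obtain ⟨Q, N₀, hN₀⟩ := hcof g
  obtain ⟨i, hi⟩ := ha Q
  obtain ⟨N₁, hN₁⟩ := hmono (a i) Q hi
  set n := max (max N₀ N₁) i with hn
  have h1 : g n ≤ m Q n := hN₀ n (le_trans (le_max_left _ _) (le_max_left _ _))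
  have h2 : m Q n ≤ f (d Q) n := hbound Q n
  have h3 : f (d Q) n ≤ f (d (a i)) n :=
    hN₁ n (le_trans (le_max_right _ _) (le_max_left _ _))
  have h4 : f (d (a i)) n < g n := by
    have : f (d (a i)) n ≤ (Finset.range (n + 1)).sup (fun j => f (d (a j)) n) :=
      Finset.le_sup (f := fun j => f (d (a j)) n) (Finset.mem_range.mpr (Nat.lt_succ_of_le (le_max_right (max N₀ N₁) i)))
    have hgn : g n = 1 + (Finset.range (n + 1)).sup (fun j => f (d (a j)) n) := rfl
    omega
  omega
end

section
/- Let η ∈ (0,1), n ∈ ℕ, and let Q = {(1−η)δ₀ + η·U_A : A ⊆ {1,…,4n}} be a class of distributions over ℕ, where δ₀ is the point mass at 0 and U_A is uniform on A. Then for any (possibly randomized) learner A : ℕ^n → Δ(ℕ), there exists q ∈ Q with E_{S ~ q^n}[TV(q, A(S))] ≥ η/4. -/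
open MeasureTheory Filter

/-- Total variation distance between two distributions over `ℕ`. -/
noncomputable def tv (p q : PMF ℕ) : ℝ :=
  ⨆ A : Set ℕ, |(p.toMeasure A).toReal - (q.toMeasure A).toReal|

/-- The distribution of an i.i.d. sample of size `m` drawn from `q`. -/
noncomputable def iidSample {α : Type*} [MeasurableSpace α] (q : PMF α) (m : ℕ) :
    Measure (Fin m → α) :=
  Measure.pi fun _ => q.toMeasure

/-- The mixture `(1 - η) δ₀ + η U_A` of the point mass at `0` and the uniform
distribution on the finite set `A` (junk values when `η ∉ [0,1]` or `A = ∅`). -/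
noncomputable def mixPMF (η : ℝ) (A : Finset ℕ) : PMF ℕ :=
  (PMF.bernoulli (min (Real.toNNReal η) 1) (min_le_right _ _)).bind fun b =>
    if h : b = true ∧ A.Nonempty then PMF.uniformOfFinset A h.2 else PMF.pure 0

/-- Realizable PAC learnability of a class of distributions over `ℕ` in total
variation distance, witnessed by the learner `A` and sample complexity `mQ`. -/
def RealizablePAC (Q : Set (PMF ℕ)) (A : ∀ m : ℕ, (Fin m → ℕ) → PMF ℕ)
    (mQ : ℝ → ℝ → ℕ) : Prop :=
  ∀ ε δ : ℝ, 0 < ε → ε < 1 → 0 < δ → δ < 1 → ∀ q ∈ Q, ∀ m ≥ mQ ε δ,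
    (iidSample q m) {S | ε < tv (A m S) q} ≤ ENNReal.ofReal δ

/-- 3-agnostic PAC learnability of a class of distributions over `ℕ` in total
variation distance, witnessed by the learner `A` and sample complexity `mQ`. -/
def Agnostic3PAC (Q : Set (PMF ℕ)) (A : ∀ m : ℕ, (Fin m → ℕ) → PMF ℕ)
    (mQ : ℝ → ℝ → ℕ) : Prop :=
  ∀ ε δ : ℝ, 0 < ε → 0 < δ → δ < 1 → ∀ P : PMF ℕ, ∀ m ≥ mQ ε δ,
    ENNReal.ofReal (1 - δ) ≤
      (iidSample P m) {S | tv (A m S) P ≤ 3 * (⨅ q : Q, tv q.1 P) + ε}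


lemma toReal_le_one (p : PMF ℕ) (A : Set ℕ) : (p.toMeasure A).toReal ≤ 1 := by
  have h := prob_le_one (μ := p.toMeasure) (s := A)
  simpa using ENNReal.toReal_mono (by simp) h

lemma abs_diff_le_one (p q : PMF ℕ) (A : Set ℕ) :
    |(p.toMeasure A).toReal - (q.toMeasure A).toReal| ≤ 1 := by
  have h1 := toReal_le_one p A; have h2 := toReal_le_one q A
  have h3 : (0:ℝ) ≤ (p.toMeasure A).toReal := ENNReal.toReal_nonneg
  have h4 : (0:ℝ) ≤ (q.toMeasure A).toReal := ENNReal.toReal_nonneg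
  rw [abs_sub_le_iff]; constructor <;> linarith

lemma tv_bdd (p q : PMF ℕ) :
    BddAbove (Set.range fun A : Set ℕ => |(p.toMeasure A).toReal - (q.toMeasure A).toReal|) :=
  ⟨1, by rintro x ⟨A, rfl⟩; exact abs_diff_le_one p q A⟩

lemma tv_nonneg (p q : PMF ℕ) : 0 ≤ tv p q := by
  have := le_ciSup (tv_bdd p q) (∅ : Set ℕ)
  exact le_trans (abs_nonneg _) this

lemma tv_le_one (p q : PMF ℕ) : tv p q ≤ 1 := ciSup_le (abs_diff_le_one p q)

lemma toMeasure_finset (p : PMF ℕ) (F : Finset ℕ) :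
    (p.toMeasure ↑F).toReal = ∑ i ∈ F, (p i).toReal := by
  rw [PMF.toMeasure_apply_finset, ENNReal.toReal_sum]
  exact fun a _ => PMF.apply_ne_top p a

lemma tv_ge_half_l1 (p q : PMF ℕ) (W : Finset ℕ) :
    (∑ i ∈ W, |(p i).toReal - (q i).toReal|) / 2 ≤ tv p q := by
  classical
  set W1 := W.filter (fun i => (q i).toReal ≤ (p i).toReal) with hW1
  set W2 := W.filter (fun i => ¬ (q i).toReal ≤ (p i).toReal) with hW2
  have h1 : ∑ i ∈ W1, ((p i).toReal - (q i).toReal) ≤ tv p q := by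
    have hle : ∑ i ∈ W1, ((p i).toReal - (q i).toReal)
        ≤ |(p.toMeasure ↑W1).toReal - (q.toMeasure ↑W1).toReal| := by
      rw [toMeasure_finset, toMeasure_finset, ← Finset.sum_sub_distrib]
      exact le_abs_self _
    exact hle.trans (le_ciSup (tv_bdd p q) (↑W1 : Set ℕ))
  have h2 : ∑ i ∈ W2, ((q i).toReal - (p i).toReal) ≤ tv p q := by
    have hle : ∑ i ∈ W2, ((q i).toReal - (p i).toReal)
        ≤ |(p.toMeasure ↑W2).toReal - (q.toMeasure ↑W2).toReal| := by
      rw [toMeasure_finset, toMeasure_finset, ← Finset.sum_sub_distrib]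
      have he : ∑ i ∈ W2, ((q i).toReal - (p i).toReal)
          = -(∑ i ∈ W2, ((p i).toReal - (q i).toReal)) := by
        rw [← Finset.sum_neg_distrib]; exact Finset.sum_congr rfl (by intros; ring)
      rw [he]; exact neg_le_abs _
    exact hle.trans (le_ciSup (tv_bdd p q) (↑W2 : Set ℕ))
  have hsplit : ∑ i ∈ W, |(p i).toReal - (q i).toReal|
      = ∑ i ∈ W1, ((p i).toReal - (q i).toReal) + ∑ i ∈ W2, ((q i).toReal - (p i).toReal) := by
    rw [← Finset.sum_filter_add_sum_filter_not W (fun i => (q i).toReal ≤ (p i).toReal)]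
    congr 1
    · exact Finset.sum_congr rfl fun i hi => abs_of_nonneg (by linarith [(Finset.mem_filter.1 hi).2])
    · refine Finset.sum_congr rfl fun i hi => ?_
      have := (Finset.mem_filter.1 hi).2
      rw [abs_of_nonpos (by linarith)]; ring
  linarith

lemma mixPMF_apply {η : ℝ} (hη1 : η ≤ 1) {B : Finset ℕ} (hB : B.Nonempty) (x : ℕ) :
    mixPMF η B x = (1 - ENNReal.ofReal η) * (if x = 0 then 1 else 0)
      + ENNReal.ofReal η * (if x ∈ B then (B.card : ENNReal)⁻¹ else 0) := by
  rw [mixPMF, PMF.bind_apply, tsum_bool]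
  simp [hB, PMF.bernoulli_apply, PMF.uniformOfFinset_apply, PMF.pure_apply,
    min_eq_left (Real.toNNReal_le_one.2 hη1), ENNReal.ofReal, ENNReal.coe_sub]

lemma mixPMF_apply_real {η : ℝ} (hη0 : 0 ≤ η) (hη1 : η ≤ 1) {B : Finset ℕ} (hB : B.Nonempty)
    (x : ℕ) : ((mixPMF η B) x).toReal
      = (1 - η) * (if x = 0 then 1 else 0) + η * (if x ∈ B then ((B.card : ℝ))⁻¹ else 0) := by
  rw [mixPMF_apply hη1 hB]
  have h1 : (1 : ENNReal) - ENNReal.ofReal η = ENNReal.ofReal (1 - η) := by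
    rw [ENNReal.ofReal_sub 1 hη0, ENNReal.ofReal_one]
  have hfin1 : (ENNReal.ofReal (1 - η) * if x = 0 then 1 else 0) ≠ ⊤ := by
    split_ifs <;> simp
  have hfin2 : (ENNReal.ofReal η * if x ∈ B then (B.card : ENNReal)⁻¹ else 0) ≠ ⊤ := by
    split_ifs
    · exact ENNReal.mul_ne_top ENNReal.ofReal_ne_top
        (ENNReal.inv_ne_top.2 (Nat.cast_ne_zero.mpr hB.card_pos.ne'))
    · simp
  rw [h1, ENNReal.toReal_add hfin1 hfin2, ENNReal.toReal_mul,
    ENNReal.toReal_mul, ENNReal.toReal_ofReal (by linarith), ENNReal.toReal_ofReal hη0]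
  congr 1
  · split_ifs <;> simp
  · split_ifs <;> simp

lemma iid_singleton (q : PMF ℕ) (n : ℕ) (S : Fin n → ℕ) :
    iidSample q n {S} = ∏ j, q (S j) := by
  rw [iidSample, ← Set.univ_pi_singleton, Measure.pi_pi]
  simp [PMF.toMeasure_apply_singleton _ _ (measurableSet_singleton _)]

lemma iid_singleton_real (q : PMF ℕ) (n : ℕ) (S : Fin n → ℕ) :
    (iidSample q n {S}).toReal = ∏ j, (q (S j)).toReal := by
  rw [iid_singleton, ENNReal.toReal_prod]

instance iid_prob (q : PMF ℕ) (n : ℕ) : IsProbabilityMeasure (iidSample q n) := by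
  unfold iidSample; infer_instance

lemma iid_singleton_ne_top (q : PMF ℕ) (n : ℕ) (S : Fin n → ℕ) :
    iidSample q n {S} ≠ ⊤ := measure_ne_top _ _

lemma tsum_iid (q : PMF ℕ) (n : ℕ) :
    ∑' S : Fin n → ℕ, (iidSample q n {S}).toReal = 1 := by
  rw [← ENNReal.tsum_toReal_eq (fun S => iid_singleton_ne_top q n S)]
  have h := MeasureTheory.Measure.tsum_indicator_apply_singleton (iidSample q n) Set.univ
    MeasurableSet.univ
  simp only [Set.indicator_univ] at h
  rw [h]; simp

lemma summable_iid (q : PMF ℕ) (n : ℕ) :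
    Summable (fun S : Fin n → ℕ => (iidSample q n {S}).toReal) := by
  apply ENNReal.summable_toReal
  have h := MeasureTheory.Measure.tsum_indicator_apply_singleton (iidSample q n) Set.univ
    MeasurableSet.univ
  simp only [Set.indicator_univ] at h
  rw [h]; simp

lemma integral_eq_tsum (q : PMF ℕ) (n : ℕ) (f : (Fin n → ℕ) → ℝ)
    (h0 : ∀ S, 0 ≤ f S) (h1 : ∀ S, f S ≤ 1) :
    ∫ S, f S ∂(iidSample q n) = ∑' S, (iidSample q n {S}).toReal * f S := by
  have hint : Integrable f (iidSample q n) := by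
    refine Integrable.mono' (integrable_const 1) ((measurable_of_countable f).aestronglyMeasurable) ?_
    filter_upwards with S
    rw [Real.norm_eq_abs, abs_of_nonneg (h0 S)]; exact h1 S
  rw [MeasureTheory.integral_countable' hint]
  simp [smul_eq_mul, measureReal_def]

lemma card_supersets (I V : Finset ℕ) (hVI : V ⊆ I) (k : ℕ) (hk : V.card ≤ k) :
    ((I.powersetCard k).filter (fun B => V ⊆ B)).card = (I \ V).card.choose (k - V.card) := by
  classical
  rw [← Finset.card_powersetCard]
  apply Finset.card_bij (fun B _ => B \ V)
  · intro B hB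
    rw [Finset.mem_filter, Finset.mem_powersetCard] at hB
    rw [Finset.mem_powersetCard]
    exact ⟨Finset.sdiff_subset_sdiff hB.1.1 le_rfl,
      by rw [Finset.card_sdiff_of_subset hB.2, hB.1.2]⟩
  · intro B hB B' hB' h
    rw [Finset.mem_filter] at hB hB'
    rw [← Finset.sdiff_union_of_subset hB.2, ← Finset.sdiff_union_of_subset hB'.2, h]
  · intro C hC
    rw [Finset.mem_powersetCard] at hC
    refine ⟨C ∪ V, ?_, ?_⟩
    · rw [Finset.mem_filter, Finset.mem_powersetCard]
      have hdisj : Disjoint C V := Finset.disjoint_left.2 fun x hx =>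
        (Finset.mem_sdiff.1 (hC.1 hx)).2
      refine ⟨⟨Finset.union_subset (hC.1.trans Finset.sdiff_subset) hVI, ?_⟩,
        Finset.subset_union_right⟩
      rw [Finset.card_union_of_disjoint hdisj, hC.2]
      omega
    · have hdisj : Disjoint C V := Finset.disjoint_left.2 fun x hx =>
        (Finset.mem_sdiff.1 (hC.1 hx)).2
      rw [Finset.union_sdiff_cancel_right hdisj]

set_option maxHeartbeats 1000000 in
lemma core_avg {η : ℝ} (hη0 : 0 < η) (hη1 : η < 1) {n : ℕ} (hn : 0 < n) (p : PMF ℕ)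
    (V : Finset ℕ) (hVI : V ⊆ Finset.Icc 1 (4*n)) (hVc : V.card ≤ n) :
    η / 4 * (((Finset.Icc 1 (4*n)).powersetCard (2*n)).filter (fun B => V ⊆ B)).card
      ≤ ∑ B ∈ ((Finset.Icc 1 (4*n)).powersetCard (2*n)).filter (fun B => V ⊆ B),
          tv (mixPMF η B) p := by
  classical
  set I := Finset.Icc 1 (4*n) with hI
  set ℱ := (I.powersetCard (2*n)).filter (fun B => V ⊆ B) with hF
  set v := V.card with hv
  set N := (4*n - v).choose (2*n - v) with hN
  set N1 := (4*n - v - 1).choose (2*n - v - 1) with hN1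
  have hIcard : I.card = 4*n := by rw [hI, Nat.card_Icc]; omega
  have hWcard : (I \ V).card = 4*n - v := by rw [Finset.card_sdiff_of_subset hVI, hIcard]
  have hNcard : ℱ.card = N := by
    rw [hF, card_supersets I V hVI _ (by omega), hWcard]
  have hmem : ∀ B ∈ ℱ, V ⊆ B ∧ B ⊆ I ∧ B.card = 2*n := by
    intro B hB
    rw [hF, Finset.mem_filter, Finset.mem_powersetCard] at hB
    exact ⟨hB.2, hB.1.1, hB.1.2⟩
  -- value of the mixture on points of I \ V
  have hval : ∀ B ∈ ℱ, ∀ i ∈ I \ V, ((mixPMF η B) i).toReal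
      = if i ∈ B then η / (2*(n:ℝ)) else 0 := by
    intro B hB i hi
    obtain ⟨hVB, hBI, hBc⟩ := hmem B hB
    have hBne : B.Nonempty := Finset.card_pos.1 (by omega)
    have hi0 : i ≠ 0 := by
      have := Finset.mem_Icc.1 (hI ▸ (Finset.mem_sdiff.1 hi).1)
      omega
    rw [mixPMF_apply_real hη0.le hη1.le hBne, if_neg hi0, hBc]
    split_ifs <;> push_cast <;> ring
  -- counting supersets containing i
  have hN1card : ∀ i ∈ I \ V, (ℱ.filter (fun B => i ∈ B)).card = N1 := by
    intro i hi
    obtain ⟨hiI, hiV⟩ := Finset.mem_sdiff.1 hi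
    have hfe : ℱ.filter (fun B => i ∈ B)
        = (I.powersetCard (2*n)).filter (fun B => insert i V ⊆ B) := by
      rw [hF, Finset.filter_filter]
      apply Finset.filter_congr
      intro B _
      simp [Finset.insert_subset_iff, and_comm]
    rw [hfe, card_supersets I (insert i V) (Finset.insert_subset hiI hVI) _
        (by rw [Finset.card_insert_of_notMem hiV]; omega)]
    have h1 : (I \ insert i V).card = 4*n - v - 1 := by
      rw [Finset.card_sdiff_of_subset (Finset.insert_subset hiI hVI), hIcard,
        Finset.card_insert_of_notMem hiV]
      omega
    have h2 : 2*n - (insert i V).card = 2*n - v - 1 := by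
      rw [Finset.card_insert_of_notMem hiV]; omega
    rw [h1, h2, hN1]
  -- nat inequalities
  have hid : (4*n - v) * N1 = N * (2*n - v) := by
    have ha : 4*n - v = (4*n - v - 1) + 1 := by omega
    have hb : 2*n - v = (2*n - v - 1) + 1 := by omega
    rw [hN, hN1, ha, hb]
    exact Nat.add_one_mul_choose_eq _ _
  have hpascal : N = N1 + (4*n - v - 1).choose (2*n - v - 1 + 1) := by
    have ha : 4*n - v = (4*n - v - 1) + 1 := by omega
    have hb : 2*n - v = (2*n - v - 1) + 1 := by omega
    rw [hN, hN1, ha, hb]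
    exact Nat.choose_succ_succ' _ _
  have hN1leN : N1 ≤ N := by omega
  have h3N1 : N ≤ 3 * N1 := by
    have h1 : (4*n - v) * N ≤ (4*n - v) * (3 * N1) := by
      calc (4*n - v) * N ≤ (3 * (2*n - v)) * N := Nat.mul_le_mul_right N (by omega)
        _ = 3 * (N * (2*n - v)) := by ring
        _ = 3 * ((4*n - v) * N1) := by rw [hid]
        _ = (4*n - v) * (3 * N1) := by ring
    exact Nat.le_of_mul_le_mul_left h1 (by omega)
  have h3N0 : N ≤ 3 * (N - N1) := by
    have h1 : (4*n - v) * (3 * N1) ≤ (4*n - v) * (2 * N) := by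
      calc (4*n - v) * (3 * N1) = 3 * ((4*n - v) * N1) := by ring
        _ = 3 * (N * (2*n - v)) := by rw [hid]
        _ = N * (3 * (2*n - v)) := by ring
        _ ≤ N * (2 * (4*n - v)) := Nat.mul_le_mul_left N (by omega)
        _ = (4*n - v) * (2 * N) := by ring
    have h2 : 3 * N1 ≤ 2 * N := Nat.le_of_mul_le_mul_left h1 (by omega)
    omega
  -- per-coordinate average lower bound
  have hiavg : ∀ i ∈ I \ V, (N : ℝ) / 3 * (η / (2*(n:ℝ)))
      ≤ ∑ B ∈ ℱ, |((mixPMF η B) i).toReal - ((p i).toReal)| := by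
    intro i hi
    set x := (p i).toReal with hx
    have hx0 : 0 ≤ x := ENNReal.toReal_nonneg
    set c := η / (2*(n:ℝ)) with hc
    have hc0 : 0 ≤ c := by positivity
    have hN0card : (ℱ.filter (fun B => ¬ i ∈ B)).card = N - N1 := by
      have h := Finset.card_filter_add_card_filter_not (s := ℱ)
        (p := fun B => i ∈ B)
      rw [hN1card i hi, hNcard] at h
      omega
    have hsum : ∑ B ∈ ℱ, |((mixPMF η B) i).toReal - x|
        = (N1 : ℝ) * |c - x| + ((N - N1 : ℕ) : ℝ) * x := by
      rw [← Finset.sum_filter_add_sum_filter_not ℱ (fun B => i ∈ B)]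
      congr 1
      · calc ∑ B ∈ ℱ.filter (fun B => i ∈ B), |((mixPMF η B) i).toReal - x|
            = ∑ B ∈ ℱ.filter (fun B => i ∈ B), |c - x| := by
              refine Finset.sum_congr rfl fun B hB => ?_
              rw [hval B (Finset.mem_filter.1 hB).1 i hi, if_pos (Finset.mem_filter.1 hB).2]
          _ = (N1 : ℝ) * |c - x| := by
              rw [Finset.sum_const, nsmul_eq_mul, hN1card i hi]
      · calc ∑ B ∈ ℱ.filter (fun B => ¬ i ∈ B), |((mixPMF η B) i).toReal - x|
            = ∑ B ∈ ℱ.filter (fun B => ¬ i ∈ B), x := by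
              refine Finset.sum_congr rfl fun B hB => ?_
              rw [hval B (Finset.mem_filter.1 hB).1 i hi, if_neg (Finset.mem_filter.1 hB).2,
                zero_sub, abs_neg, abs_of_nonneg hx0]
          _ = ((N - N1 : ℕ) : ℝ) * x := by
              rw [Finset.sum_const, nsmul_eq_mul, hN0card]
    rw [hsum]
    have hcast1 : (N : ℝ) ≤ 3 * (N1 : ℝ) := by exact_mod_cast h3N1
    have hcast2 : (N : ℝ) ≤ 3 * ((N - N1 : ℕ) : ℝ) := by exact_mod_cast h3N0
    have habs1 : c - x ≤ |c - x| := le_abs_self _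
    have habs0 : 0 ≤ |c - x| := abs_nonneg _
    nlinarith [mul_nonneg (by linarith : (0:ℝ) ≤ (N1:ℝ) - (N:ℝ)/3) habs0,
      mul_nonneg (by linarith : (0:ℝ) ≤ ((N - N1 : ℕ):ℝ) - (N:ℝ)/3) hx0,
      mul_le_mul_of_nonneg_left habs1 (by positivity : (0:ℝ) ≤ (N:ℝ)/3)]
  -- put it together
  have hstep1 : ∑ B ∈ ℱ, (∑ i ∈ I \ V, |((mixPMF η B) i).toReal - (p i).toReal|) / 2
      ≤ ∑ B ∈ ℱ, tv (mixPMF η B) p :=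
    Finset.sum_le_sum fun B _ => tv_ge_half_l1 _ _ _
  have hswap : ∑ B ∈ ℱ, (∑ i ∈ I \ V, |((mixPMF η B) i).toReal - (p i).toReal|) / 2
      = (∑ i ∈ I \ V, ∑ B ∈ ℱ, |((mixPMF η B) i).toReal - (p i).toReal|) / 2 := by
    rw [← Finset.sum_div, Finset.sum_comm]
  have hsumlow : ∑ i ∈ I \ V, ((N:ℝ)/3 * (η/(2*(n:ℝ))))
      ≤ ∑ i ∈ I \ V, ∑ B ∈ ℱ, |((mixPMF η B) i).toReal - (p i).toReal| :=
    Finset.sum_le_sum hiavg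
  rw [Finset.sum_const, hWcard, nsmul_eq_mul] at hsumlow
  have h3n : (3:ℝ)*(n:ℝ) ≤ ((4*n - v : ℕ) : ℝ) := by
    have h : 3*n ≤ 4*n - v := by omega
    exact_mod_cast h
  have hn' : ((n:ℝ)) ≠ 0 := Nat.cast_ne_zero.2 hn.ne'
  have hu0 : (0:ℝ) ≤ η/(2*(n:ℝ)) := by positivity
  have hun : 2*(n:ℝ) * (η/(2*(n:ℝ))) = η := by field_simp
  have hfinal : η/4 * (N:ℝ) ≤ ((4*n - v:ℕ):ℝ) * ((N:ℝ)/3 * (η/(2*(n:ℝ)))) / 2 := by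
    nlinarith [mul_nonneg (mul_nonneg (sub_nonneg.2 h3n) (Nat.cast_nonneg N)) hu0,
      Nat.cast_nonneg (α := ℝ) N]
  have hcard : ((ℱ.card : ℕ) : ℝ) = (N : ℝ) := by exact_mod_cast congrArg Nat.cast hNcard
  rw [hcard]
  linarith [hstep1, hswap.symm ▸ hstep1]

lemma perS {η : ℝ} (hη0 : 0 < η) (hη1 : η < 1) {n : ℕ} (hn : 0 < n) (p : PMF ℕ)
    (S : Fin n → ℕ) :
    η / 4 * ∑ B ∈ (Finset.Icc 1 (4*n)).powersetCard (2*n),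
        (iidSample (mixPMF η B) n {S}).toReal
      ≤ ∑ B ∈ (Finset.Icc 1 (4*n)).powersetCard (2*n),
          (iidSample (mixPMF η B) n {S}).toReal * tv (mixPMF η B) p := by
  classical
  set I := Finset.Icc 1 (4*n) with hI
  set ℬ := I.powersetCard (2*n) with hBdef
  set V := (Finset.image S Finset.univ).erase 0 with hV
  have hVcard : V.card ≤ n := by
    calc V.card ≤ (Finset.image S Finset.univ).card := Finset.card_erase_le
      _ ≤ (Finset.univ : Finset (Fin n)).card := Finset.card_image_le
      _ = n := by simp
  set g : ℕ → ℝ := fun x => if x = 0 then 1 - η else if x ∈ V then η / (2*(n:ℝ)) else 0 with hg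
  set c : ℝ := ∏ j, g (S j) with hc
  have hg0 : ∀ x, 0 ≤ g x := by
    intro x; rw [hg]; dsimp only; split_ifs
    · linarith
    · positivity
    · exact le_rfl
  have hc0 : 0 ≤ c := Finset.prod_nonneg fun j _ => hg0 (S j)
  have hw : ∀ B ∈ ℬ, (iidSample (mixPMF η B) n {S}).toReal = if V ⊆ B then c else 0 := by
    intro B hBm
    rw [hBdef, Finset.mem_powersetCard] at hBm
    obtain ⟨hBI, hBc⟩ := hBm
    have hBne : B.Nonempty := Finset.card_pos.1 (by omega)
    have h0B : (0:ℕ) ∉ B := fun h => by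
      have := Finset.mem_Icc.1 (hBI h); omega
    rw [iid_singleton_real]
    split_ifs with hVB
    · rw [hc]
      refine Finset.prod_congr rfl fun j _ => ?_
      rw [mixPMF_apply_real hη0.le hη1.le hBne]
      by_cases hj : S j = 0
      · rw [hg]; simp [hj, h0B]
      · have hjV : S j ∈ V := by
          rw [hV, Finset.mem_erase]
          exact ⟨hj, Finset.mem_image.2 ⟨j, Finset.mem_univ j, rfl⟩⟩
        have hjB : S j ∈ B := hVB hjV
        rw [hg]; simp only [if_neg hj, if_pos hjV, if_pos hjB, hBc]
        push_cast; ring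
    · obtain ⟨x, hxV, hxB⟩ := Finset.not_subset.1 hVB
      rw [hV] at hxV
      obtain ⟨hx0, hxim⟩ := Finset.mem_erase.1 hxV
      obtain ⟨j, _, hj⟩ := Finset.mem_image.1 hxim
      refine Finset.prod_eq_zero (Finset.mem_univ j) ?_
      rw [mixPMF_apply_real hη0.le hη1.le hBne, hj]
      simp [hx0, hxB]
  by_cases hVI : V ⊆ I
  · have hL : ∑ B ∈ ℬ, (iidSample (mixPMF η B) n {S}).toReal
        = c * (ℬ.filter (fun B => V ⊆ B)).card := by
      rw [Finset.sum_congr rfl hw, ← Finset.sum_filter, Finset.sum_const, nsmul_eq_mul,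
        mul_comm]
    have hR : ∑ B ∈ ℬ, (iidSample (mixPMF η B) n {S}).toReal * tv (mixPMF η B) p
        = c * ∑ B ∈ ℬ.filter (fun B => V ⊆ B), tv (mixPMF η B) p := by
      have e1 : ∀ B ∈ ℬ, (iidSample (mixPMF η B) n {S}).toReal * tv (mixPMF η B) p
          = if V ⊆ B then c * tv (mixPMF η B) p else 0 := by
        intro B hBm; rw [hw B hBm]; split_ifs <;> simp
      rw [Finset.sum_congr rfl e1, ← Finset.sum_filter, ← Finset.mul_sum]
    rw [hL, hR]
    have hcore := core_avg hη0 hη1 hn p V hVI hVcard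
    calc η/4 * (c * ((ℬ.filter (fun B => V ⊆ B)).card : ℝ))
        = c * (η/4 * ((ℬ.filter (fun B => V ⊆ B)).card : ℝ)) := by ring
      _ ≤ c * ∑ B ∈ ℬ.filter (fun B => V ⊆ B), tv (mixPMF η B) p :=
          mul_le_mul_of_nonneg_left hcore hc0
  · have hz : ∀ B ∈ ℬ, (iidSample (mixPMF η B) n {S}).toReal = 0 := by
      intro B hBm
      have hBI : B ⊆ I := (Finset.mem_powersetCard.1 (hBdef ▸ hBm)).1
      rw [hw B hBm, if_neg (fun hsub => hVI (hsub.trans hBI))]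
    have hz2 : ∀ B ∈ ℬ, (iidSample (mixPMF η B) n {S}).toReal * tv (mixPMF η B) p = 0 := by
      intro B hBm; rw [hz B hBm, zero_mul]
    rw [Finset.sum_congr rfl hz, Finset.sum_congr rfl hz2]
    simp

/-- No-free-lunch lower bound for distribution learning: for the class
`{(1-η)δ₀ + η U_A : A ⊆ {1,…,4n}}`, every learner using samples of size `n`
has expected TV-error at least `η/4` against some member of the class. -/
theorem no_free_lunch_distribution_learning (η : ℝ) (hη0 : 0 < η) (hη1 : η < 1)
    (n : ℕ) (hn : 0 < n) (A : (Fin n → ℕ) → PMF ℕ) :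
    ∃ q : PMF ℕ,
      (∃ B : Finset ℕ, B.Nonempty ∧ ↑B ⊆ Finset.Icc 1 (4 * n) ∧ q = mixPMF η B) ∧
      η / 4 ≤ ∫ S, tv q (A S) ∂(iidSample q n) := by
  classical
  set I := Finset.Icc 1 (4*n) with hI
  set ℬ := I.powersetCard (2*n) with hBdef
  have hIcard : I.card = 4*n := by rw [hI, Nat.card_Icc]; omega
  have hBne : ℬ.Nonempty := by
    rw [← Finset.card_pos, hBdef, Finset.card_powersetCard, hIcard]
    exact Nat.choose_pos (by omega)
  have hFeq : ∀ B ∈ ℬ, ∫ S, tv (mixPMF η B) (A S) ∂(iidSample (mixPMF η B) n)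
      = ∑' S : Fin n → ℕ, (iidSample (mixPMF η B) n {S}).toReal * tv (mixPMF η B) (A S) :=
    fun B _ => integral_eq_tsum _ n _ (fun S => tv_nonneg _ _) (fun S => tv_le_one _ _)
  have hsumm : ∀ B : Finset ℕ, Summable (fun S : Fin n → ℕ =>
      (iidSample (mixPMF η B) n {S}).toReal * tv (mixPMF η B) (A S)) := by
    intro B
    refine Summable.of_nonneg_of_le
      (fun S => mul_nonneg ENNReal.toReal_nonneg (tv_nonneg _ _))
      (fun S => ?_) (summable_iid (mixPMF η B) n)
    calc (iidSample (mixPMF η B) n {S}).toReal * tv (mixPMF η B) (A S)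
        ≤ (iidSample (mixPMF η B) n {S}).toReal * 1 :=
          mul_le_mul_of_nonneg_left (tv_le_one _ _) ENNReal.toReal_nonneg
      _ = _ := mul_one _
  have hsummw : ∀ B : Finset ℕ, Summable
      (fun S : Fin n → ℕ => (iidSample (mixPMF η B) n {S}).toReal) :=
    fun B => summable_iid _ n
  have hmain : ∑ B ∈ ℬ, (η/4 : ℝ)
      ≤ ∑ B ∈ ℬ, ∫ S, tv (mixPMF η B) (A S) ∂(iidSample (mixPMF η B) n) := by
    have hchain : ∑ B ∈ ℬ, ∫ S, tv (mixPMF η B) (A S) ∂(iidSample (mixPMF η B) n)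
        = ∑' S : Fin n → ℕ, ∑ B ∈ ℬ,
            (iidSample (mixPMF η B) n {S}).toReal * tv (mixPMF η B) (A S) := by
      rw [Finset.sum_congr rfl hFeq, ← Summable.tsum_finsetSum (fun B _ => hsumm B)]
    have hlow : ∑' S : Fin n → ℕ, (η/4) * ∑ B ∈ ℬ, (iidSample (mixPMF η B) n {S}).toReal
        ≤ ∑' S : Fin n → ℕ, ∑ B ∈ ℬ,
            (iidSample (mixPMF η B) n {S}).toReal * tv (mixPMF η B) (A S) := by
      refine Summable.tsum_le_tsum (fun S => perS hη0 hη1 hn (A S) S) ?_ ?_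
      · exact Summable.mul_left _ (summable_sum fun B _ => hsummw B)
      · exact summable_sum fun B _ => hsumm B
    have heq2 : ∑' S : Fin n → ℕ, (η/4) * ∑ B ∈ ℬ, (iidSample (mixPMF η B) n {S}).toReal
        = ∑ B ∈ ℬ, (η/4 : ℝ) := by
      rw [tsum_mul_left, Summable.tsum_finsetSum (fun B _ => hsummw B)]
      rw [Finset.sum_congr rfl (fun B _ => tsum_iid (mixPMF η B) n)]
      rw [Finset.sum_const, Finset.sum_const]
      simp [mul_comm]
    rw [hchain, ← heq2]
    exact hlow
  obtain ⟨B, hBm, hle⟩ := Finset.exists_le_of_sum_le hBne hmain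
  rw [hBdef, Finset.mem_powersetCard] at hBm
  obtain ⟨hBI, hBc⟩ := hBm
  exact ⟨mixPMF η B, ⟨B, Finset.card_pos.1 (by omega), by exact_mod_cast hBI, rfl⟩, hle⟩
end

section
/- Let Q be a class of distributions over ℕ and Q' a finite class such that for every q ∈ Q there is p ∈ Q' with TV(p,q) ≤ ε/4. If A is a 3-agnostic PAC learner for Q' with sample complexity m'(ε,δ), then A is a 3-agnostic PAC learner for Q with sample complexity m(ε,δ) ≤ m'(ε/4, δ) + c for an appropriate adjustment of the accuracy parameter; in particular, any class of distributions admitting finite ε-covers in TV distance for every ε > 0 is 3-agnostic PAC learnable. -/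
open MeasureTheory Filter

namespace TVAux


lemma meas_toReal_le_one (p : PMF ℕ) (A : Set ℕ) : (p.toMeasure A).toReal ≤ 1 :=
  ENNReal.toReal_mono ENNReal.one_ne_top prob_le_one

lemma tv_bdd (p q : PMF ℕ) :
    BddAbove (Set.range fun A : Set ℕ => |(p.toMeasure A).toReal - (q.toMeasure A).toReal|) := by
  refine ⟨1, ?_⟩
  rintro _ ⟨A, rfl⟩
  have h1 := meas_toReal_le_one p A
  have h2 := meas_toReal_le_one q A
  have h3 : (0:ℝ) ≤ (p.toMeasure A).toReal := ENNReal.toReal_nonneg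
  have h4 : (0:ℝ) ≤ (q.toMeasure A).toReal := ENNReal.toReal_nonneg
  rw [abs_sub_le_iff]; constructor <;> linarith

lemma abs_le_tv (p q : PMF ℕ) (A : Set ℕ) :
    |(p.toMeasure A).toReal - (q.toMeasure A).toReal| ≤ tv p q :=
  le_ciSup (tv_bdd p q) A

lemma tv_nonneg (p q : PMF ℕ) : 0 ≤ tv p q :=
  le_trans (abs_nonneg _) (abs_le_tv p q ∅)

lemma tv_le (p q : PMF ℕ) (c : ℝ)
    (h : ∀ A : Set ℕ, |(p.toMeasure A).toReal - (q.toMeasure A).toReal| ≤ c) : tv p q ≤ c :=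
  ciSup_le h

lemma tv_triangle (p q r : PMF ℕ) : tv p r ≤ tv p q + tv q r := by
  refine tv_le _ _ _ fun A => ?_
  calc |(p.toMeasure A).toReal - (r.toMeasure A).toReal|
      ≤ |(p.toMeasure A).toReal - (q.toMeasure A).toReal| +
        |(q.toMeasure A).toReal - (r.toMeasure A).toReal| := abs_sub_le _ _ _
    _ ≤ tv p q + tv q r := add_le_add (abs_le_tv p q A) (abs_le_tv q r A)

lemma summable_pmf (p : PMF ℕ) : Summable (fun n => (p n).toReal) := by
  apply ENNReal.summable_toReal; simp [p.tsum_coe]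

lemma toMeasure_toReal (p : PMF ℕ) (A : Set ℕ) :
    (p.toMeasure A).toReal = ∑' n, A.indicator (fun n => (p n).toReal) n := by
  rw [p.toMeasure_apply (Set.to_countable A).measurableSet, ENNReal.tsum_toReal_eq]
  · congr 1; funext n
    by_cases h : n ∈ A <;> simp [Set.indicator, h]
  · intro n
    by_cases h : n ∈ A <;> simp [Set.indicator, h, PMF.apply_ne_top]

lemma tsum_pmf (p : PMF ℕ) : ∑' n, (p n).toReal = 1 := by
  rw [← ENNReal.tsum_toReal_eq (fun n => PMF.apply_ne_top p n), p.tsum_coe, ENNReal.toReal_one]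

/-- The Yatracos set of a pair of distributions. -/
def yB (p q : PMF ℕ) : Set ℕ := {n | q n < p n}

lemma diff_repr (p q : PMF ℕ) (A : Set ℕ) :
    (p.toMeasure A).toReal - (q.toMeasure A).toReal
      = ∑' n, A.indicator (fun n => (p n).toReal - (q n).toReal) n := by
  rw [toMeasure_toReal, toMeasure_toReal,
    ← Summable.tsum_sub ((summable_pmf p).indicator A) ((summable_pmf q).indicator A)]
  congr 1; funext n
  by_cases h : n ∈ A <;> simp [Set.indicator, h]

lemma tv_eq (p q : PMF ℕ) :
    tv p q = (p.toMeasure (yB p q)).toReal - (q.toMeasure (yB p q)).toReal := by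
  set d : ℕ → ℝ := fun n => (p n).toReal - (q n).toReal with hd
  have hsd : Summable d := (summable_pmf p).sub (summable_pmf q)
  have hdB : ∀ n ∈ yB p q, 0 ≤ d n := by
    intro n hn
    have : (q n).toReal < (p n).toReal :=
      (ENNReal.toReal_lt_toReal (PMF.apply_ne_top q n) (PMF.apply_ne_top p n)).2 hn
    simp [hd]; linarith
  have hdBc : ∀ n ∉ yB p q, d n ≤ 0 := by
    intro n hn
    have h1 : p n ≤ q n := not_lt.mp hn
    have : (p n).toReal ≤ (q n).toReal :=
      ENNReal.toReal_mono (PMF.apply_ne_top q n) h1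
    simp [hd]; linarith
  have htot : ∑' n, d n = 0 := by
    rw [hd, Summable.tsum_sub (summable_pmf p) (summable_pmf q), tsum_pmf, tsum_pmf]; ring
  have hsplit : ∑' n, (yB p q).indicator d n + ∑' n, (yB p q)ᶜ.indicator d n = 0 := by
    rw [← Summable.tsum_add (hsd.indicator _) (hsd.indicator _)]
    rw [← htot]; congr 1; funext n
    have := congrFun (Set.indicator_self_add_compl (yB p q) d) n
    simpa using this
  have key : ∀ A : Set ℕ, |∑' n, A.indicator d n| ≤ ∑' n, (yB p q).indicator d n := by
    intro A
    rw [abs_le]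
    constructor
    · rw [neg_le, ← tsum_neg]
      have step : ∑' n, -A.indicator d n ≤ ∑' n, (yB p q)ᶜ.indicator (fun n => -d n) n := by
        refine Summable.tsum_le_tsum ?_ ((hsd.neg.indicator A).congr ?_) (hsd.neg.indicator _)
        · intro n
          by_cases hA : n ∈ A <;> by_cases hB : n ∈ yB p q <;>
            simp only [Set.indicator, hA, hB, Set.mem_compl_iff, not_true_eq_false,
              not_false_eq_true, if_true, if_false, neg_zero, neg_neg, le_refl] <;>
          first
          | rfl
          | exact hdB n hB
          | exact hdBc n hB
          | (have h1 := hdB n hB; simp only [hA, if_true, if_false]; try linarith)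
          | (have h1 := hdBc n hB; simp only [hA, if_true, if_false]; try linarith)
          | (have h1 := hdB n hB; linarith)
          | (have h1 := hdBc n hB; linarith)
          | simp
        · intro n; by_cases hA : n ∈ A <;> simp [Set.indicator, hA]
      rw [tsum_neg] at step ⊢
      have h2 : ∑' n, (yB p q)ᶜ.indicator (fun n => -d n) n = - ∑' n, (yB p q)ᶜ.indicator d n := by
        rw [← tsum_neg]; congr 1; funext n
        by_cases hB : n ∈ (yB p q)ᶜ <;> simp [Set.indicator, hB]
      rw [h2] at step
      have h3 : ∑' n, (yB p q)ᶜ.indicator d n = - ∑' n, (yB p q).indicator d n := by linarith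
      rw [h3] at step; linarith
    · refine Summable.tsum_le_tsum ?_ (hsd.indicator A) (hsd.indicator _)
      intro n
      by_cases hA : n ∈ A <;> by_cases hB : n ∈ yB p q <;>
        simp only [Set.indicator, hA, hB, if_true, if_false, le_refl] <;>
      first
      | rfl
      | (have h1 := hdB n hB; linarith)
      | (have h1 := hdBc n hB; linarith)
      | simp
  have hB0 : 0 ≤ ∑' n, (yB p q).indicator d n := by
    refine tsum_nonneg fun n => ?_
    by_cases hB : n ∈ yB p q <;> simp [Set.indicator, hB, hdB n]
  refine le_antisymm (tv_le _ _ _ fun A => ?_) ?_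
  · rw [diff_repr p q A, diff_repr p q (yB p q), ← hd]; exact key A
  calc (p.toMeasure (yB p q)).toReal - (q.toMeasure (yB p q)).toReal
      ≤ |(p.toMeasure (yB p q)).toReal - (q.toMeasure (yB p q)).toReal| := le_abs_self _
    _ ≤ tv p q := abs_le_tv p q _

/-- empirical frequency of a set in a sample -/
noncomputable def emp (m : ℕ) (S : Fin m → ℕ) (B : Set ℕ) : ℝ :=
  (∑ i, B.indicator (fun _ => (1:ℝ)) (S i)) / m

/-- score of a candidate against an empirical oracle `h` over Yatracos sets of `T` -/
noncomputable def score (T : Finset (PMF ℕ)) (hT : T.Nonempty) (h : Set ℕ → ℝ)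
    (q : PMF ℕ) : ℝ :=
  (T ×ˢ T).sup' (hT.product hT) fun pr => |(q.toMeasure (yB pr.1 pr.2)).toReal - h (yB pr.1 pr.2)|

/-- minimum distance estimate -/
noncomputable def mde (T : Finset (PMF ℕ)) (hT : T.Nonempty) (h : Set ℕ → ℝ) : PMF ℕ :=
  (Finset.exists_min_image T (score T hT h) hT).choose

lemma mde_mem (T : Finset (PMF ℕ)) (hT : T.Nonempty) (h : Set ℕ → ℝ) :
    mde T hT h ∈ T :=
  (Finset.exists_min_image T (score T hT h) hT).choose_spec.1

lemma mde_min (T : Finset (PMF ℕ)) (hT : T.Nonempty) (h : Set ℕ → ℝ) :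
    ∀ q ∈ T, score T hT h (mde T hT h) ≤ score T hT h q :=
  (Finset.exists_min_image T (score T hT h) hT).choose_spec.2

lemma le_score (T : Finset (PMF ℕ)) (hT : T.Nonempty) (h : Set ℕ → ℝ) (q : PMF ℕ)
    {pr : PMF ℕ × PMF ℕ} (hpr : pr ∈ T ×ˢ T) :
    |(q.toMeasure (yB pr.1 pr.2)).toReal - h (yB pr.1 pr.2)| ≤ score T hT h q := by
  unfold score
  exact Finset.le_sup' (fun pr : PMF ℕ × PMF ℕ =>
    |(q.toMeasure (yB pr.1 pr.2)).toReal - h (yB pr.1 pr.2)|) hpr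

lemma score_le (T : Finset (PMF ℕ)) (hT : T.Nonempty) (h : Set ℕ → ℝ) (P : PMF ℕ)
    (Δ : ℝ) (hΔ : ∀ p ∈ T, ∀ r ∈ T, |h (yB p r) - (P.toMeasure (yB p r)).toReal| ≤ Δ)
    (q : PMF ℕ) :
    score T hT h q ≤ tv q P + Δ := by
  unfold score
  refine Finset.sup'_le _ _ fun pr hpr => ?_
  obtain ⟨h1, h2⟩ := Finset.mem_product.mp hpr
  calc |(q.toMeasure (yB pr.1 pr.2)).toReal - h (yB pr.1 pr.2)|
      ≤ |(q.toMeasure (yB pr.1 pr.2)).toReal - (P.toMeasure (yB pr.1 pr.2)).toReal|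
        + |(P.toMeasure (yB pr.1 pr.2)).toReal - h (yB pr.1 pr.2)| := abs_sub_le _ _ _
    _ ≤ tv q P + Δ := by
        refine add_le_add (abs_le_tv _ _ _) ?_
        rw [abs_sub_comm]; exact hΔ _ h1 _ h2

set_option maxHeartbeats 1000000 in
lemma yatracos (T : Finset (PMF ℕ)) (hT : T.Nonempty) (P : PMF ℕ) (h : Set ℕ → ℝ) (Δ : ℝ)
    (hΔ : ∀ p ∈ T, ∀ r ∈ T, |h (yB p r) - (P.toMeasure (yB p r)).toReal| ≤ Δ)
    (qs : PMF ℕ) (hqs : qs ∈ T) :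
    tv (mde T hT h) P ≤ 3 * tv qs P + 2 * Δ := by
  set qh := mde T hT h with hqh
  have hmem := mde_mem T hT h
  have hpair : (qh, qs) ∈ T ×ˢ T := Finset.mem_product.mpr ⟨hmem, hqs⟩
  have h1 : tv qh qs ≤ score T hT h qh + score T hT h qs := by
    rw [tv_eq]
    calc (qh.toMeasure (yB qh qs)).toReal - (qs.toMeasure (yB qh qs)).toReal
        ≤ |(qh.toMeasure (yB qh qs)).toReal - h (yB qh qs)|
          + |h (yB qh qs) - (qs.toMeasure (yB qh qs)).toReal| := by
          have := abs_sub_le ((qh.toMeasure (yB qh qs)).toReal) (h (yB qh qs))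
            ((qs.toMeasure (yB qh qs)).toReal)
          have h2 := le_abs_self ((qh.toMeasure (yB qh qs)).toReal
            - (qs.toMeasure (yB qh qs)).toReal)
          linarith
      _ ≤ score T hT h qh + score T hT h qs := by
          refine add_le_add ?_ ?_
          · have hx := le_score T hT h qh hpair
            simpa using hx
          · rw [abs_sub_comm]
            have hx := le_score T hT h qs hpair
            simpa using hx
  have h2 : score T hT h qh ≤ score T hT h qs := mde_min T hT h qs hqs
  have h3 : score T hT h qs ≤ tv qs P + Δ := score_le T hT h P Δ hΔ qs
  have h4 : tv qh P ≤ tv qh qs + tv qs P := tv_triangle _ _ _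
  linarith

lemma integrable_of_bdd {α : Type*} [MeasurableSpace α] [Countable α]
    [MeasurableSingletonClass α]
    (μ : Measure α) [IsFiniteMeasure μ] (f : α → ℝ) (C : ℝ) (h : ∀ x, |f x| ≤ C) :
    Integrable f μ := by
  refine (integrable_const C).mono' (measurable_of_countable f).aestronglyMeasurable ?_
  exact ae_of_all _ fun x => by simpa using h x

lemma integral_sq_sum_le (P : PMF ℕ) (m : ℕ) (g : ℕ → ℝ)
    (hb : ∀ x, |g x| ≤ 1) (h0 : ∫ x, g x ∂P.toMeasure = 0) :
    ∫ S, (∑ i, g (S i))^2 ∂(iidSample P m) ≤ m := by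
  letI : MeasureSpace ℕ := ⟨P.toMeasure⟩
  have hvol : iidSample P m = (volume : Measure (Fin m → ℕ)) := by
    rw [iidSample]; rfl
  haveI hP1 : IsProbabilityMeasure (volume : Measure ℕ) := inferInstanceAs (IsProbabilityMeasure P.toMeasure)
  haveI hP2 : IsProbabilityMeasure (volume : Measure (Fin m → ℕ)) := by
    rw [MeasureTheory.volume_pi]; infer_instance
  set f : Fin m → Fin m → Fin m → ℕ → ℝ :=
    fun i j k x => (if k = i then g x else 1) * (if k = j then g x else 1) with hf
  have hιg : Integrable g (volume : Measure ℕ) := integrable_of_bdd _ g 1 hb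
  have hfb : ∀ i j k x, |f i j k x| ≤ 1 := by
    intro i j k x
    rw [hf]; dsimp only
    rw [abs_mul]
    have h1 : |if k = i then g x else 1| ≤ 1 := by split <;> simp [hb x]
    have h2 : |if k = j then g x else 1| ≤ 1 := by split <;> simp [hb x]
    calc |if k = i then g x else 1| * |if k = j then g x else 1|
        ≤ 1 * 1 := mul_le_mul h1 h2 (abs_nonneg _) zero_le_one
      _ = 1 := one_mul 1
  have hfι : ∀ i j k, Integrable (f i j k) (volume : Measure ℕ) :=
    fun i j k => integrable_of_bdd _ _ 1 (hfb i j k)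
  have hprod : ∀ (i j : Fin m) (S : Fin m → ℕ), g (S i) * g (S j) = ∏ k, f i j k (S k) := by
    intro i j S
    rw [hf]; dsimp only
    rw [Finset.prod_mul_distrib, Finset.prod_ite_eq' Finset.univ i (fun k => g (S k)),
      Finset.prod_ite_eq' Finset.univ j (fun k => g (S k))]
    simp
  have hsq : ∀ S : Fin m → ℕ, (∑ i, g (S i))^2 = ∑ i, ∑ j, ∏ k, f i j k (S k) := by
    intro S
    rw [sq, Finset.sum_mul_sum]
    congr 1; funext i; congr 1; funext j
    exact hprod i j S
  have hint_prod : ∀ i j : Fin m,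
      Integrable (fun S : Fin m → ℕ => ∏ k, f i j k (S k)) (volume : Measure (Fin m → ℕ)) := by
    intro i j
    exact Integrable.fintype_prod (f := fun k => f i j k) (fun k => hfι i j k)
  have hsum : ∫ S : Fin m → ℕ, (∑ i, g (S i))^2
      = ∑ i : Fin m, ∑ j : Fin m, ∫ S : Fin m → ℕ, ∏ k, f i j k (S k) := by
    rw [show (fun S : Fin m → ℕ => (∑ i, g (S i))^2)
        = fun S => ∑ i : Fin m, ∑ j : Fin m, ∏ k, f i j k (S k) from funext hsq]
    rw [integral_finset_sum _ (fun i _ => integrable_finset_sum _ (fun j _ => hint_prod i j))]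
    exact Finset.sum_congr rfl fun i _ =>
      integral_finset_sum _ (fun j _ => hint_prod i j)
  have hgsq : ∫ x : ℕ, (g x)^2 ∂(volume : Measure ℕ) ≤ 1 := by
    have : ∀ x : ℕ, (g x)^2 ≤ 1 := by
      intro x
      have := hb x
      nlinarith [abs_nonneg (g x), sq_abs (g x)]
    calc ∫ x : ℕ, (g x)^2 ∂(volume : Measure ℕ) ≤ ∫ _ : ℕ, (1:ℝ) ∂(volume : Measure ℕ) := by
          refine integral_mono ?_ (integrable_const 1) this
          exact integrable_of_bdd _ _ 1 (fun x => by
            rw [abs_of_nonneg (sq_nonneg _)]; exact this x)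
      _ = 1 := by simp
  have hcell : ∀ i j : Fin m, ∫ S : Fin m → ℕ, ∏ k, f i j k (S k)
      = if i = j then ∫ x : ℕ, (g x)^2 ∂(volume : Measure ℕ) else 0 := by
    intro i j
    rw [MeasureTheory.volume_pi, MeasureTheory.integral_fintype_prod_eq_prod (𝕜 := ℝ) (fun k => f i j k)]
    by_cases hij : i = j
    · subst hij
      rw [if_pos rfl]
      have : ∀ k, ∫ x : ℕ, f i i k x = if k = i then ∫ x : ℕ, (g x)^2 ∂(volume : Measure ℕ) else 1 := by
        intro k
        rw [hf]; dsimp only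
        by_cases hk : k = i
        · subst hk; rw [if_pos rfl]; congr 1; funext x; simp [sq]
        · simp only [if_neg hk, mul_one]
          simp
      rw [Finset.prod_congr rfl (fun k _ => this k),
        Finset.prod_ite_eq' Finset.univ i
          (fun _ => ∫ x : ℕ, (g x)^2 ∂(volume : Measure ℕ))]
      simp
    · rw [if_neg hij]
      refine Finset.prod_eq_zero (Finset.mem_univ i) ?_
      rw [hf]; dsimp only
      simp only [if_pos rfl, if_neg hij]
      simp only [mul_one, one_mul]
      exact h0
  rw [hvol, hsum]
  have : ∑ i : Fin m, ∑ j : Fin m, ∫ S : Fin m → ℕ, ∏ k, f i j k (S k)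
      = ∑ i : Fin m, ∫ x : ℕ, (g x)^2 ∂(volume : Measure ℕ) := by
    refine Finset.sum_congr rfl fun i _ => ?_
    rw [Finset.sum_congr rfl (fun j _ => hcell i j)]
    simp
  rw [this]
  calc ∑ _i : Fin m, ∫ x : ℕ, (g x)^2 ∂(volume : Measure ℕ)
      ≤ ∑ _i : Fin m, (1:ℝ) := Finset.sum_le_sum (fun i _ => hgsq)
    _ = m := by simp

instance iidProb (P : PMF ℕ) (m : ℕ) : IsProbabilityMeasure (iidSample P m) := by
  rw [iidSample]; infer_instance

lemma cheb (P : PMF ℕ) (B : Set ℕ) (m : ℕ) (hm : 0 < m) (t : ℝ) (ht : 0 < t) :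
    iidSample P m {S | t ≤ |emp m S B - (P.toMeasure B).toReal|}
      ≤ ENNReal.ofReal (1/(m * t^2)) := by
  set μ := iidSample P m with hμ
  set c : ℝ := (P.toMeasure B).toReal with hc
  have hc0 : 0 ≤ c := ENNReal.toReal_nonneg
  have hc1 : c ≤ 1 := ENNReal.toReal_mono ENNReal.one_ne_top prob_le_one
  set g : ℕ → ℝ := fun x => B.indicator (fun _ => (1:ℝ)) x - c with hg
  have hb : ∀ x, |g x| ≤ 1 := by
    intro x
    rw [hg]; dsimp only
    by_cases hx : x ∈ B <;> simp [Set.indicator, hx, abs_le] <;> constructor <;> linarith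
  have hι : Integrable (fun x => B.indicator (fun _ => (1:ℝ)) x) P.toMeasure := by
    refine integrable_of_bdd _ _ 1 fun x => ?_
    by_cases hx : x ∈ B <;> simp [Set.indicator, hx]
  have h0 : ∫ x, g x ∂P.toMeasure = 0 := by
    rw [hg]; dsimp only
    rw [integral_sub hι (integrable_const c), integral_const]
    have : ∫ x, B.indicator (fun _ => (1:ℝ)) x ∂P.toMeasure = c := by
      rw [hc]
      exact integral_indicator_one (Set.to_countable B).measurableSet
    rw [this]
    simp
  have hdiff : ∀ S : Fin m → ℕ, emp m S B - c = (∑ i, g (S i)) / m := by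
    intro S
    rw [emp, hg]; dsimp only
    rw [Finset.sum_sub_distrib, Finset.sum_const, Finset.card_univ, Fintype.card_fin,
      nsmul_eq_mul, sub_div]
    have hm' : (m:ℝ) ≠ 0 := Nat.cast_ne_zero.mpr hm.ne'
    field_simp
  set fsq : (Fin m → ℕ) → ℝ := fun S => (∑ i, g (S i))^2 / (m:ℝ)^2 with hfsq
  have hbsum : ∀ S : Fin m → ℕ, |∑ i, g (S i)| ≤ m := by
    intro S
    calc |∑ i, g (S i)| ≤ ∑ i, |g (S i)| := Finset.abs_sum_le_sum_abs _ _
      _ ≤ ∑ _i : Fin m, (1:ℝ) := Finset.sum_le_sum fun i _ => hb _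
      _ = m := by simp
  have hfsqb : ∀ S, |fsq S| ≤ 1 := by
    intro S
    rw [hfsq]; dsimp only
    have h1 := hbsum S
    have h2 := abs_nonneg (∑ i, g (S i))
    have hm' : (0:ℝ) < m := Nat.cast_pos.mpr hm
    rw [abs_div, abs_of_nonneg (sq_nonneg ((m:ℝ)))]
    rw [div_le_one (by positivity)]
    calc |(∑ i, g (S i))^2| = |∑ i, g (S i)|^2 := by rw [← sq_abs]; rw [abs_of_nonneg (sq_nonneg _)]
      _ ≤ (m:ℝ)^2 := by nlinarith
  have hιf : Integrable fsq μ :=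
    integrable_of_bdd μ fsq 1 hfsqb
  have hmono : {S : Fin m → ℕ | t ≤ |emp m S B - c|} ⊆ {S | t^2 ≤ fsq S} := by
    intro S hS
    simp only [Set.mem_setOf_eq] at hS ⊢
    rw [hfsq]; dsimp only
    rw [hdiff S] at hS
    have h1 : t^2 ≤ |(∑ i, g (S i)) / m|^2 := by
      have := pow_le_pow_left₀ ht.le hS 2
      simpa using this
    rw [sq_abs, div_pow] at h1
    exact h1
  have hmarkov := mul_meas_ge_le_integral_of_nonneg
    (μ := μ) (f := fsq) (ae_of_all _ fun S => by
      rw [hfsq]; positivity) hιf (t^2)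
  have hint : ∫ S, fsq S ∂μ ≤ 1/(m:ℝ) := by
    rw [hfsq]
    dsimp only
    rw [integral_div]
    have := integral_sq_sum_le P m g hb h0
    rw [← hμ] at this
    have hm' : (0:ℝ) < m := Nat.cast_pos.mpr hm
    rw [div_le_div_iff₀ (by positivity) hm']
    calc (∫ S, (∑ i, g (S i))^2 ∂μ) * m ≤ (m:ℝ) * m := by nlinarith
      _ = 1 * ((m:ℝ)^2) := by ring
  have hfin : μ {S | t ≤ |emp m S B - c|} ≠ ⊤ := measure_ne_top μ _
  have hfin2 : μ {S | t^2 ≤ fsq S} ≠ ⊤ := measure_ne_top μ _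
  have hmono' : μ {S | t ≤ |emp m S B - c|} ≤ μ {S | t^2 ≤ fsq S} := measure_mono hmono
  have htoReal : (μ {S | t^2 ≤ fsq S}).toReal ≤ 1/((m:ℝ) * t^2) := by
    have ht2 : (0:ℝ) < t^2 := by positivity
    have hm' : (0:ℝ) < m := Nat.cast_pos.mpr hm
    rw [le_div_iff₀ (by positivity)]
    calc (μ {S | t^2 ≤ fsq S}).toReal * ((m:ℝ) * t^2)
        = (t^2 * (μ {S | t^2 ≤ fsq S}).toReal) * m := by ring
      _ ≤ (∫ S, fsq S ∂μ) * m := by simp only [Measure.real] at hmarkov; nlinarith [ENNReal.toReal_nonneg (a := μ {S | t^2 ≤ fsq S})]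
      _ ≤ (1/(m:ℝ)) * m := by nlinarith [ENNReal.toReal_nonneg (a := μ {S | t^2 ≤ fsq S})]
      _ = 1 := by field_simp
  calc μ {S | t ≤ |emp m S B - c|} ≤ μ {S | t^2 ≤ fsq S} := hmono'
    _ = ENNReal.ofReal ((μ {S | t^2 ≤ fsq S}).toReal) := (ENNReal.ofReal_toReal hfin2).symm
    _ ≤ ENNReal.ofReal (1/((m:ℝ) * t^2)) := ENNReal.ofReal_le_ofReal htoReal


def phiAux (N : ℕ → ℕ) : ℕ → ℕ
  | 0 => 0
  | (k+1) => max (phiAux N k + 1) ((k+1) * ((N (k+1))^2 + 1))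

lemma phiAux_mono (N : ℕ → ℕ) : Monotone (phiAux N) :=
  (strictMono_nat_of_lt_succ fun k =>
    lt_of_lt_of_le (Nat.lt_succ_self _) (le_max_left _ _)).monotone

lemma le_phiAux (N : ℕ → ℕ) : ∀ k, k ≤ phiAux N k := by
  intro k
  induction k with
  | zero => simp [phiAux]
  | succ k ih =>
      have : phiAux N k + 1 ≤ phiAux N (k+1) := le_max_left _ _
      omega

lemma mul_le_phiAux (N : ℕ → ℕ) : ∀ k, k * ((N k)^2 + 1) ≤ phiAux N k := by
  intro k
  cases k with
  | zero => simp
  | succ k => exact le_max_right _ _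

lemma tv_comm_le (p q : PMF ℕ) : tv q p ≤ tv p q := by
  refine tv_le _ _ _ fun A => ?_
  rw [abs_sub_comm]; exact abs_le_tv p q A

end TVAux

/-- Learning via finite covers: (1) a 3-agnostic learner for a finite
`(ε/4)`-cover `Q'` of `Q`, run with accuracy `ε/4`, is a 3-agnostic learner
for `Q` with accuracy `ε`; (2) hence any class of distributions admitting a
finite `ε`-cover in TV distance for every `ε > 0` is 3-agnostic PAC learnable. -/
theorem learnable_via_finite_covers (Q : Set (PMF ℕ)) (hQ : Q.Nonempty) :
    (∀ (Q' : Finset (PMF ℕ)) (A : ∀ m : ℕ, (Fin m → ℕ) → PMF ℕ)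
        (m' : ℝ → ℝ → ℕ) (ε : ℝ), 0 < ε →
      Agnostic3PAC ↑Q' A m' →
      (∀ q ∈ Q, ∃ p ∈ Q', tv p q ≤ ε / 4) →
      ∀ δ : ℝ, 0 < δ → δ < 1 → ∀ P : PMF ℕ, ∀ m ≥ m' (ε / 4) δ,
        ENNReal.ofReal (1 - δ) ≤
          (iidSample P m) {S | tv (A m S) P ≤ 3 * (⨅ q : Q, tv q.1 P) + ε}) ∧
    ((∀ ε : ℝ, 0 < ε → ∃ Q' : Finset (PMF ℕ), ∀ q ∈ Q, ∃ p ∈ Q', tv p q ≤ ε) →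
      ∃ A mQ, Agnostic3PAC Q A mQ) := by
  constructor
  · -- Part 1
    intro Q' A m' ε hε hA hcov δ hδ hδ1 P m hm
    haveI : Nonempty Q := hQ.to_subtype
    have h := hA (ε/4) δ (by positivity) hδ hδ1 P m hm
    refine le_trans h (measure_mono ?_)
    intro S hS
    simp only [Set.mem_setOf_eq] at hS ⊢
    have hinf : (⨅ q : (↑Q' : Set (PMF ℕ)), tv q.1 P) ≤ (⨅ q : Q, tv q.1 P) + ε/4 := by
      rw [← sub_le_iff_le_add]
      refine le_ciInf fun q => ?_
      obtain ⟨p, hp, hple⟩ := hcov q.1 q.2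
      have h1 : (⨅ r : (↑Q' : Set (PMF ℕ)), tv r.1 P) ≤ tv p P :=
        ciInf_le ⟨0, by rintro x ⟨r, rfl⟩; exact TVAux.tv_nonneg _ _⟩
          (⟨p, Finset.mem_coe.mpr hp⟩ : (↑Q' : Set (PMF ℕ)))
      have h2 : tv p P ≤ tv p q.1 + tv q.1 P := TVAux.tv_triangle _ _ _
      linarith
    linarith
  · -- Part 2
    intro hcov
    haveI : Nonempty Q := hQ.to_subtype
    have hex : ∀ k : ℕ, ∃ T : Finset (PMF ℕ), ∀ q ∈ Q, ∃ p ∈ T, tv p q ≤ 1/((k:ℝ)+1) :=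
      fun k => hcov _ (by positivity)
    choose C hC using hex
    have hCne : ∀ k, (C k).Nonempty := by
      intro k
      obtain ⟨q0, hq0⟩ := hQ
      obtain ⟨p, hp, -⟩ := hC k q0 hq0
      exact ⟨p, hp⟩
    set N : ℕ → ℕ := fun k => (C k).card with hN
    set φ : ℕ → ℕ := TVAux.phiAux N with hphi
    set kk : ℕ → ℕ := fun m => Nat.findGreatest (fun k => φ k ≤ m) m with hkk
    refine ⟨fun m S => TVAux.mde (C (kk m)) (hCne _) (fun Bs => TVAux.emp m S Bs),
      fun ε δ => φ (max ⌈16/(ε^2*δ)⌉₊ ⌈6/ε⌉₊), ?_⟩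
    intro ε δ hε hδ hδ1 P m hm
    set K := max ⌈16/(ε^2*δ)⌉₊ ⌈6/ε⌉₊ with hKdef
    have hφKm : φ K ≤ m := hm
    have hKk : K ≤ kk m := Nat.le_findGreatest (le_trans (TVAux.le_phiAux N K) hφKm) hφKm
    have hφ0 : φ 0 ≤ m := by
      rw [hphi]; show TVAux.phiAux N 0 ≤ m; rw [TVAux.phiAux]; exact Nat.zero_le m
    have hφkkm : φ (kk m) ≤ m := Nat.findGreatest_spec (P := fun k => φ k ≤ m) (Nat.zero_le m) hφ0
    set k := kk m with hkdef
    have hK1 : 1 ≤ K :=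
      le_trans (Nat.ceil_pos.mpr (by positivity : (0:ℝ) < 6/ε)) (le_max_right _ _)
    have hk1 : 1 ≤ k := le_trans hK1 hKk
    have hm0 : 0 < m := lt_of_lt_of_le hk1 (le_trans (TVAux.le_phiAux N k) hφkkm)
    have hkN : (k * ((N k)^2 + 1) : ℕ) ≤ m := le_trans (TVAux.mul_le_phiAux N k) hφkkm
    have hk16 : (16/(ε^2*δ) : ℝ) ≤ (k:ℝ) := by
      calc (16/(ε^2*δ):ℝ) ≤ (⌈16/(ε^2*δ)⌉₊ : ℝ) := Nat.le_ceil _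
        _ ≤ (K:ℝ) := Nat.cast_le.mpr (le_max_left _ _)
        _ ≤ (k:ℝ) := Nat.cast_le.mpr hKk
    have hk6 : (6/ε : ℝ) ≤ (k:ℝ) := by
      calc (6/ε:ℝ) ≤ (⌈6/ε⌉₊ : ℝ) := Nat.le_ceil _
        _ ≤ (K:ℝ) := Nat.cast_le.mpr (le_max_right _ _)
        _ ≤ (k:ℝ) := Nat.cast_le.mpr hKk
    have hN1 : 1 ≤ N k := Finset.card_pos.mpr (hCne k)
    set T := C k with hTdef
    classical
    set Bad : Set (Fin m → ℕ) := ⋃ pr ∈ (T ×ˢ T), {S : Fin m → ℕ |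
      ε/4 ≤ |TVAux.emp m S (TVAux.yB pr.1 pr.2)
        - (P.toMeasure (TVAux.yB pr.1 pr.2)).toReal|} with hBadDef
    have hBad : iidSample P m Bad ≤ ENNReal.ofReal δ := by
      have h2 := measure_biUnion_finset_le (μ := iidSample P m) (T ×ˢ T)
        (fun pr => {S : Fin m → ℕ | ε/4 ≤ |TVAux.emp m S (TVAux.yB pr.1 pr.2)
          - (P.toMeasure (TVAux.yB pr.1 pr.2)).toReal|})
      have h3 : ∀ pr ∈ T ×ˢ T, iidSample P m {S : Fin m → ℕ |
          ε/4 ≤ |TVAux.emp m S (TVAux.yB pr.1 pr.2)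
            - (P.toMeasure (TVAux.yB pr.1 pr.2)).toReal|}
          ≤ ENNReal.ofReal (1/(m * (ε/4)^2)) :=
        fun pr _ => TVAux.cheb P _ m hm0 (ε/4) (by positivity)
      have hnum : ((N k * N k : ℕ) : ℝ) * (1/((m:ℝ) * (ε/4)^2)) ≤ δ := by
        have hm' : ((k:ℝ) * ((N k:ℝ)^2 + 1)) ≤ (m:ℝ) := by exact_mod_cast hkN
        have h16 : 16 ≤ (k:ℝ) * (ε^2 * δ) := by
          rw [div_le_iff₀ (by positivity)] at hk16; linarith
        have hNpos : (1:ℝ) ≤ (N k : ℝ) := by exact_mod_cast hN1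
        have hmpos : (0:ℝ) < (m:ℝ) := by exact_mod_cast hm0
        have hkpos : (0:ℝ) < (k:ℝ) := by
          have : (1:ℝ) ≤ (k:ℝ) := by exact_mod_cast hk1
          linarith
        have s1 : δ * ε^2 * ((k:ℝ) * ((N k:ℝ)^2+1)) ≤ δ * ε^2 * m :=
          mul_le_mul_of_nonneg_left hm' (by positivity)
        have s2 : 16 * ((N k:ℝ)^2+1) ≤ ((k:ℝ) * (ε^2*δ)) * ((N k:ℝ)^2+1) :=
          mul_le_mul_of_nonneg_right h16 (by positivity)
        have key : 16 * (N k:ℝ)^2 ≤ δ * ((m:ℝ) * ε^2) := by nlinarith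
        have heq : ((N k * N k : ℕ) : ℝ) * (1/((m:ℝ) * (ε/4)^2))
            = (16 * (N k:ℝ)^2) / ((m:ℝ) * ε^2) := by
          push_cast
          field_simp
          ring
        rw [heq, div_le_iff₀ (by positivity)]
        linarith [key]
      calc iidSample P m Bad
          ≤ ∑ pr ∈ T ×ˢ T, iidSample P m {S : Fin m → ℕ |
              ε/4 ≤ |TVAux.emp m S (TVAux.yB pr.1 pr.2)
                - (P.toMeasure (TVAux.yB pr.1 pr.2)).toReal|} := h2
        _ ≤ ∑ _pr ∈ T ×ˢ T, ENNReal.ofReal (1/((m:ℝ) * (ε/4)^2)) :=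
            Finset.sum_le_sum h3
        _ = ((T ×ˢ T).card : ℕ) • ENNReal.ofReal (1/((m:ℝ) * (ε/4)^2)) := by
            rw [Finset.sum_const]
        _ = ((N k * N k : ℕ) : ENNReal) * ENNReal.ofReal (1/((m:ℝ) * (ε/4)^2)) := by
            rw [Finset.card_product, nsmul_eq_mul]
        _ = ENNReal.ofReal (((N k * N k : ℕ) : ℝ) * (1/((m:ℝ) * (ε/4)^2))) := by
            rw [← ENNReal.ofReal_natCast (N k * N k), ← ENNReal.ofReal_mul (by positivity)]
        _ ≤ ENNReal.ofReal δ := ENNReal.ofReal_le_ofReal hnum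
    have hsub : Badᶜ ⊆ {S : Fin m → ℕ |
        tv (TVAux.mde T (hCne k) (fun Bs => TVAux.emp m S Bs)) P
          ≤ 3 * (⨅ q : Q, tv q.1 P) + ε} := by
      intro S hS
      have hS' : S ∉ Bad := hS
      have hΔ : ∀ p ∈ T, ∀ r ∈ T, |TVAux.emp m S (TVAux.yB p r)
          - (P.toMeasure (TVAux.yB p r)).toReal| ≤ ε/4 := by
        intro p hp r hr
        by_contra hcon
        push_neg at hcon
        refine hS' ?_
        rw [hBadDef]
        exact Set.mem_iUnion.mpr ⟨(p, r), Set.mem_iUnion.mpr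
          ⟨Finset.mem_product.mpr ⟨hp, hr⟩, le_of_lt hcon⟩⟩
      obtain ⟨qs, hqs, hqsmin⟩ := Finset.exists_min_image T (fun q => tv q P) (hCne k)
      have hyat := TVAux.yatracos T (hCne k) P (fun Bs => TVAux.emp m S Bs) (ε/4) hΔ qs hqs
      have hqsb : tv qs P ≤ (⨅ q : Q, tv q.1 P) + 1/((k:ℝ)+1) := by
        rw [← sub_le_iff_le_add]
        refine le_ciInf fun q => ?_
        obtain ⟨p, hp, hple⟩ := hC k q.1 q.2
        have h1 : tv qs P ≤ tv p P := hqsmin p hp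
        have h2 : tv p P ≤ tv p q.1 + tv q.1 P := TVAux.tv_triangle _ _ _
        linarith
      have hkb : 3 * (1/((k:ℝ)+1)) ≤ ε/2 := by
        have hkpos : (0:ℝ) < (k:ℝ) + 1 := by positivity
        have h6 : 6 ≤ ε * k := by rw [div_le_iff₀ hε] at hk6; linarith
        rw [mul_one_div, div_le_div_iff₀ hkpos (by norm_num : (0:ℝ) < 2)]
        nlinarith
      simp only [Set.mem_setOf_eq]
      linarith [hyat, hqsb, hkb]
    have hms : MeasurableSet Bad := (Set.to_countable _).measurableSet
    haveI := TVAux.iidProb P m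
    have hcompl : iidSample P m Badᶜ = 1 - iidSample P m Bad := prob_compl_eq_one_sub hms
    calc ENNReal.ofReal (1 - δ) = 1 - ENNReal.ofReal δ := by
          rw [ENNReal.ofReal_sub 1 hδ.le, ENNReal.ofReal_one]
      _ ≤ 1 - iidSample P m Bad := tsub_le_tsub_left hBad 1
      _ = iidSample P m Badᶜ := hcompl.symm
      _ ≤ _ := measure_mono hsub
end

section
/- There exists a countable family {H_k : k ∈ ℕ} of classes of distributions over ℕ and a single learnable class H₀ = {δ₀} such that: (a) no H_k is PAC learnable in total variation distance; (b) for each k, every q ∈ H_k satisfies TV(δ₀, q) ≤ 1/k (so H₀ is a (1/k)-approximation of H_k); and (c) 1/k → 0. -/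
open MeasureTheory Filter

namespace NFL

open Finset

noncomputable section
open scoped Classical

/-! ### Basic TV facts -/

lemma meas_toReal_le_one (p : PMF ℕ) (A : Set ℕ) : (p.toMeasure A).toReal ≤ 1 := by
  have h := prob_le_one (μ := p.toMeasure) (s := A)
  calc (p.toMeasure A).toReal ≤ (1 : ENNReal).toReal :=
        ENNReal.toReal_mono ENNReal.one_ne_top h
    _ = 1 := by simp

lemma abs_meas_le_one (p q : PMF ℕ) (A : Set ℕ) :
    |(p.toMeasure A).toReal - (q.toMeasure A).toReal| ≤ 1 := by
  have h1 := meas_toReal_le_one p A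
  have h2 := meas_toReal_le_one q A
  have h3 : (0:ℝ) ≤ (p.toMeasure A).toReal := ENNReal.toReal_nonneg
  have h4 : (0:ℝ) ≤ (q.toMeasure A).toReal := ENNReal.toReal_nonneg
  rw [abs_sub_le_iff]; constructor <;> linarith

lemma abs_le_tv (p q : PMF ℕ) (C : Set ℕ) :
    |(p.toMeasure C).toReal - (q.toMeasure C).toReal| ≤ tv p q :=
  le_ciSup (f := fun A : Set ℕ => |(p.toMeasure A).toReal - (q.toMeasure A).toReal|)
    ⟨1, by rintro x ⟨A, rfl⟩; exact abs_meas_le_one p q A⟩ C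

lemma tv_le_one (p q : PMF ℕ) : tv p q ≤ 1 :=
  ciSup_le fun A => abs_meas_le_one p q A

lemma tv_self (p : PMF ℕ) : tv p p = 0 := by
  simp only [tv, sub_self, abs_zero]
  exact ciSup_const

/-! ### Blocks -/

def blockElt (i : ℕ) (b : Bool) : ℕ := 2*i + 1 + (cond b 1 0)

lemma blockElt_pos (i : ℕ) (b : Bool) : 0 < blockElt i b := by
  cases b <;> simp [blockElt]

lemma blockElt_le (i : ℕ) (b : Bool) : blockElt i b ≤ 2*i + 2 := by
  cases b <;> simp [blockElt]

lemma blockElt_inj {i j : ℕ} {b c : Bool} (h : blockElt i b = blockElt j c) :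
    i = j ∧ b = c := by
  cases b <;> cases c <;> simp only [blockElt, cond] at h <;>
    first
      | exact ⟨by omega, rfl⟩
      | exact absurd h (by omega)

def Afin (T : ℕ) (f : Fin T → Bool) : Finset ℕ :=
  univ.image fun i : Fin T => blockElt i (f i)

lemma mem_Afin {T : ℕ} {f : Fin T → Bool} {x : ℕ} :
    x ∈ Afin T f ↔ ∃ i : Fin T, blockElt i (f i) = x := by
  simp [Afin]

lemma card_Afin (T : ℕ) (f : Fin T → Bool) : (Afin T f).card = T := by
  rw [Afin, card_image_of_injective _ ?_, card_univ, Fintype.card_fin]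
  intro i j h
  exact Fin.val_injective (blockElt_inj h).1

lemma zero_not_mem_Afin {T : ℕ} {f : Fin T → Bool} : 0 ∉ Afin T f := by
  rw [mem_Afin]
  rintro ⟨i, hi⟩
  exact (Nat.ne_of_lt (blockElt_pos i (f i))).symm hi
lemma Afin_subset {T : ℕ} {f : Fin T → Bool} : Afin T f ⊆ range (2*T + 1) := by
  intro x hx
  rcases mem_Afin.mp hx with ⟨i, rfl⟩
  have h1 := blockElt_le i (f i)
  have h2 := i.2
  rw [mem_range]; omega

def Bi (i : ℕ) : Finset ℕ := {blockElt i false, blockElt i true}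

lemma Bi_subset {T : ℕ} {i : ℕ} (hi : i < T) : Bi i ⊆ range (2*T + 1) := by
  intro x hx
  rw [Bi, mem_insert, mem_singleton] at hx
  rw [mem_range]
  rcases hx with rfl | rfl <;> simp [blockElt] <;> omega

lemma blockElt_mem_Bi (i : ℕ) (b : Bool) : blockElt i b ∈ Bi i := by
  cases b <;> simp [Bi]

lemma mem_Bi_elim {i x : ℕ} (hx : x ∈ Bi i) : ∃ b, x = blockElt i b := by
  rw [Bi, mem_insert, mem_singleton] at hx
  rcases hx with rfl | rfl
  exacts [⟨false, rfl⟩, ⟨true, rfl⟩]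

/-! ### The mass function -/

def Gf (k T : ℕ) (f : Fin T → Bool) (x : ℕ) : ℝ :=
  if x = 0 then 1 - 1/(k:ℝ) else if x ∈ Afin T f then 1/((k:ℝ)*(T:ℝ)) else 0

variable {k T : ℕ} {f : Fin T → Bool}

lemma one_div_k_le_one {k : ℕ} (hk : 1 ≤ k) : 1/(k:ℝ) ≤ 1 := by
  have : (1:ℝ) ≤ (k:ℝ) := by exact_mod_cast hk
  rw [div_le_one (by linarith)]; linarith

lemma one_div_k_pos {k : ℕ} (hk : 1 ≤ k) : 0 < 1/(k:ℝ) := by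
  have : (1:ℝ) ≤ (k:ℝ) := by exact_mod_cast hk
  positivity

lemma Gf_nonneg (hk : 1 ≤ k) (x : ℕ) : 0 ≤ Gf k T f x := by
  unfold Gf
  split_ifs with h1 h2
  · linarith [one_div_k_le_one hk]
  · have h3 : (1:ℝ) ≤ (k:ℝ) := by exact_mod_cast hk
    positivity
  · exact le_refl 0
    
lemma Gf_zero : Gf k T f 0 = 1 - 1/(k:ℝ) := by simp [Gf]

lemma Gf_blockElt_self (i : Fin T) : Gf k T f (blockElt i (f i)) = 1/((k:ℝ)*(T:ℝ)) := by
  have h0 : blockElt i (f i) ≠ 0 := (Nat.ne_of_lt (blockElt_pos i (f i))).symm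
  have hm : blockElt (i:ℕ) (f i) ∈ Afin T f := mem_Afin.mpr ⟨i, rfl⟩
  simp [Gf, h0, hm]

lemma blockElt_not_mem_Afin (i : Fin T) : blockElt i (!f i) ∉ Afin T f := by
  rw [mem_Afin]
  rintro ⟨j, hj⟩
  obtain ⟨hij, hbc⟩ := blockElt_inj hj
  have : j = i := Fin.val_injective hij
  subst this
  simp at hbc

lemma Gf_blockElt_other (i : Fin T) : Gf k T f (blockElt i (!f i)) = 0 := by
  have h0 : blockElt i (!f i) ≠ 0 := (Nat.ne_of_lt (blockElt_pos i (!f i))).symm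
  simp [Gf, h0, blockElt_not_mem_Afin i]
/-! ### The distributions -/

def qf (k T : ℕ) (f : Fin T → Bool) : PMF ℕ := mixPMF (1/(k:ℝ)) (Afin T f)

lemma Afin_nonempty (hT : 1 ≤ T) : (Afin T f).Nonempty := by
  rw [← Finset.card_pos, card_Afin]; omega

lemma qf_apply (hk : 1 ≤ k) (hT : 1 ≤ T) (x : ℕ) :
    qf k T f x = ENNReal.ofReal (Gf k T f x) := by
  have hA : (Afin T f).Nonempty := Afin_nonempty hT
  have hη1 : 1/(k:ℝ) ≤ 1 := one_div_k_le_one hk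
  have hη0 : 0 ≤ 1/(k:ℝ) := (one_div_k_pos hk).le
  have hmin : min (Real.toNNReal (1/(k:ℝ))) 1 = Real.toNNReal (1/(k:ℝ)) :=
    min_eq_left (Real.toNNReal_le_one.mpr hη1)
  have hc : ((Real.toNNReal (1/(k:ℝ)) : NNReal) : ENNReal) = ENNReal.ofReal (1/(k:ℝ)) := rfl
  rw [qf, mixPMF, PMF.bind_apply, tsum_bool]
  rw [dif_neg (by simp), dif_pos ⟨rfl, hA⟩]
  simp only [PMF.bernoulli_apply, Bool.cond_false, Bool.cond_true, hmin,
    ENNReal.coe_sub, ENNReal.coe_one, hc, PMF.pure_apply, PMF.uniformOfFinset_apply, card_Afin]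
  by_cases hx0 : x = 0
  · subst hx0
    rw [if_pos rfl, if_neg zero_not_mem_Afin, Gf_zero]
    rw [ENNReal.ofReal_sub _ hη0, ENNReal.ofReal_one]
    ring
  · rw [if_neg hx0]
    by_cases hxA : x ∈ Afin T f
    · rw [if_pos hxA]
      obtain ⟨i, rfl⟩ := mem_Afin.mp hxA
      have hfx : Gf k T f (blockElt i (f i)) = 1/((k:ℝ)*(T:ℝ)) := Gf_blockElt_self i
      rw [hfx]
      have hT0 : (0:ℝ) < (T:ℝ) := by exact_mod_cast hT
      have : ((T:ℕ) : ENNReal)⁻¹ = ENNReal.ofReal (1/(T:ℝ)) := by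
        rw [one_div, ENNReal.ofReal_inv_of_pos hT0, ENNReal.ofReal_natCast]
      rw [this, ← ENNReal.ofReal_mul hη0]
      rw [mul_zero, zero_add]
      congr 1
      field_simp
    · rw [if_neg hxA]
      have : Gf k T f x = 0 := by simp [Gf, hx0, hxA]
      simp [this]
/-! ### Sums of the mass function -/

lemma sum_Gf (hk : 1 ≤ k) (hT : 1 ≤ T) : ∑ x ∈ range (2*T+1), Gf k T f x = 1 := by
  have h0 : (0:ℕ) ∈ range (2*T+1) := by simp
  rw [← Finset.add_sum_erase _ _ h0, Gf_zero]
  have hcongr : ∀ x ∈ (range (2*T+1)).erase 0,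
      Gf k T f x = if x ∈ Afin T f then 1/((k:ℝ)*(T:ℝ)) else 0 := by
    intro x hx
    rcases mem_erase.mp hx with ⟨hx0, _⟩
    simp [Gf, hx0]
  rw [Finset.sum_congr rfl hcongr, Finset.sum_ite_mem]
  have hsub : (range (2*T+1)).erase 0 ∩ Afin T f = Afin T f := by
    apply inter_eq_right.mpr
    intro x hx
    exact mem_erase.mpr ⟨fun h => zero_not_mem_Afin (h ▸ hx), Afin_subset hx⟩
  rw [hsub, Finset.sum_const, card_Afin, nsmul_eq_mul]
  have hk0 : (k:ℝ) ≠ 0 := by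
    have : (1:ℝ) ≤ (k:ℝ) := by exact_mod_cast hk
    linarith
  have hT0 : (T:ℝ) ≠ 0 := by
    have : (1:ℝ) ≤ (T:ℝ) := by exact_mod_cast hT
    linarith
  field_simp
  ring

lemma sum_Gf_Bi (i : Fin T) : ∑ x ∈ Bi (i:ℕ), Gf k T f x = 1/((k:ℝ)*(T:ℝ)) := by
  have hne : blockElt (i:ℕ) false ≠ blockElt (i:ℕ) true := by
    intro h; simpa using (blockElt_inj h).2
  rw [Bi, Finset.sum_pair hne]
  cases hfi : f i with
  | false =>
      have h1 : Gf k T f (blockElt i (f i)) = 1/((k:ℝ)*(T:ℝ)) := Gf_blockElt_self i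
      have h2 : Gf k T f (blockElt i (!f i)) = 0 := Gf_blockElt_other i
      rw [hfi] at h1 h2
      simp only [Bool.not_false] at h2
      rw [h1, h2, add_zero]
  | true =>
      have h1 : Gf k T f (blockElt i (f i)) = 1/((k:ℝ)*(T:ℝ)) := Gf_blockElt_self i
      have h2 : Gf k T f (blockElt i (!f i)) = 0 := Gf_blockElt_other i
      rw [hfi] at h1 h2
      simp only [Bool.not_true] at h2
      rw [h1, h2, zero_add]

lemma sum_Gf_avoid (hk : 1 ≤ k) (hT : 1 ≤ T) (i : Fin T) :
    ∑ x ∈ range (2*T+1) \ Bi (i:ℕ), Gf k T f x = 1 - 1/((k:ℝ)*(T:ℝ)) := by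
  rw [Finset.sum_sdiff_eq_sub (Bi_subset i.2), sum_Gf hk hT, sum_Gf_Bi]
/-! ### Samples -/

def Fsamp (m T : ℕ) : Finset (Fin m → ℕ) := Fintype.piFinset fun _ => range (2*T+1)

def Favoid (m T : ℕ) (i : ℕ) : Finset (Fin m → ℕ) :=
  Fintype.piFinset fun _ => range (2*T+1) \ Bi i

lemma Favoid_subset {m : ℕ} (i : ℕ) : Favoid m T i ⊆ Fsamp m T :=
  Fintype.piFinset_subset _ _ fun _ => sdiff_subset

lemma sum_w_Fsamp (hk : 1 ≤ k) (hT : 1 ≤ T) (m : ℕ) :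
    ∑ s ∈ Fsamp m T, ∏ j, Gf k T f (s j) = 1 := by
  rw [Fsamp, ← Finset.prod_univ_sum]
  simp [sum_Gf hk hT]

lemma sum_w_Favoid (hk : 1 ≤ k) (hT : 1 ≤ T) (m : ℕ) (i : Fin T) :
    ∑ s ∈ Favoid m T (i:ℕ), ∏ j, Gf k T f (s j) = (1 - 1/((k:ℝ)*(T:ℝ)))^m := by
  rw [Favoid, ← Finset.prod_univ_sum]
  simp [sum_Gf_avoid hk hT i]

lemma w_nonneg (hk : 1 ≤ k) {m : ℕ} (s : Fin m → ℕ) :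
    0 ≤ ∏ j, Gf k T f (s j) :=
  Finset.prod_nonneg fun j _ => Gf_nonneg hk _

/-! ### Measures of finite sets -/

lemma toMeasure_finset (q : PMF ℕ) (B : Finset ℕ) :
    q.toMeasure ↑B = ∑ x ∈ B, q x := by
  have hB : (↑B : Set ℕ) = ⋃ x ∈ B, {x} := by
    exact (Set.biUnion_of_singleton ((↑B : Set ℕ))).symm
  rw [hB, measure_biUnion_finset ?_ fun b _ => measurableSet_singleton b]
  · exact Finset.sum_congr rfl fun x _ => q.toMeasure_apply_singleton x (measurableSet_singleton x)
  · intro a _ b _ hab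
    simp [Set.disjoint_singleton, hab]

lemma toMeasure_finset_real (q : PMF ℕ) (B : Finset ℕ) :
    (q.toMeasure ↑B).toReal = ∑ x ∈ B, (q x).toReal := by
  rw [toMeasure_finset, ENNReal.toReal_sum fun x _ => PMF.apply_ne_top q x]

lemma iid_singleton (q : PMF ℕ) (m : ℕ) (s : Fin m → ℕ) :
    iidSample q m {s} = ∏ j, q (s j) := by
  rw [iidSample, ← Set.univ_pi_singleton s, Measure.pi_pi]
  exact Finset.prod_congr rfl fun j _ => q.toMeasure_apply_singleton _ (measurableSet_singleton _)

lemma le_iid (q : PMF ℕ) (m : ℕ) (B : Finset (Fin m → ℕ)) (E : Set (Fin m → ℕ))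
    (hBE : ↑B ⊆ E) : ∑ s ∈ B, ∏ j, q (s j) ≤ iidSample q m E := by
  have h1 : ∑ s ∈ B, ∏ j, q (s j) = iidSample q m (⋃ s ∈ B, {s}) := by
    rw [measure_biUnion_finset ?_ fun b _ => measurableSet_singleton b]
    · exact Finset.sum_congr rfl fun s _ => (iid_singleton q m s).symm
    · intro a _ b _ hab
      simp [Set.disjoint_singleton, hab]
  rw [h1]
  exact measure_mono (Set.iUnion₂_subset fun s hs => Set.singleton_subset_iff.mpr (hBE hs))
/-! ### The estimator and the TV lower bound -/

def est (p : PMF ℕ) (i : ℕ) : Bool :=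
  if (p (blockElt i false)).toReal ≤ (p (blockElt i true)).toReal then true else false

lemma est_iff (p : PMF ℕ) (i : ℕ) :
    est p i = true ↔ (p (blockElt i false)).toReal ≤ (p (blockElt i true)).toReal := by
  unfold est
  split_ifs with hc <;> simp [hc]

lemma est_le (p : PMF ℕ) (i : ℕ) (b : Bool) (h : est p i ≠ b) :
    (p (blockElt i b)).toReal ≤ (p (blockElt i (!b))).toReal := by
  cases b with
  | false => simpa using (est_iff p i).mp (Bool.ne_false_iff.mp h)
  | true =>
      have hnc : ¬ (p (blockElt i false)).toReal ≤ (p (blockElt i true)).toReal :=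
        fun hcc => h ((est_iff p i).mpr hcc)
      simpa using le_of_not_ge hnc

lemma card_est_le (hk : 1 ≤ k) (hT : 1 ≤ T) (f : Fin T → Bool) (p : PMF ℕ) :
    ((univ.filter fun i : Fin T => est p (i:ℕ) ≠ f i).card : ℝ) * (1/((k:ℝ)*(T:ℝ)))
      ≤ 2 * tv p (qf k T f) := by
  have hkT : (0:ℝ) < 1/((k:ℝ)*(T:ℝ)) := by
    have h1 : (1:ℝ) ≤ (k:ℝ) := by exact_mod_cast hk
    have h2 : (1:ℝ) ≤ (T:ℝ) := by exact_mod_cast hT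
    positivity
  set D := univ.filter (fun i : Fin T => est p (i:ℕ) ≠ f i) with hD
  have hinj1 : ∀ x ∈ D, ∀ y ∈ D, blockElt (x:ℕ) (f x) = blockElt (y:ℕ) (f y) → x = y :=
    fun x _ y _ h => Fin.val_injective (blockElt_inj h).1
  have hinj2 : ∀ x ∈ D, ∀ y ∈ D, blockElt (x:ℕ) (!f x) = blockElt (y:ℕ) (!f y) → x = y :=
    fun x _ y _ h => Fin.val_injective (blockElt_inj h).1
  set C1 := D.image (fun i : Fin T => blockElt (i:ℕ) (f i)) with hC1
  set C2 := D.image (fun i : Fin T => blockElt (i:ℕ) (!f i)) with hC2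
  have hq1 : ((qf k T f).toMeasure ↑C1).toReal = D.card * (1/((k:ℝ)*(T:ℝ))) := by
    rw [toMeasure_finset_real, Finset.sum_image hinj1]
    have heq : ∀ i ∈ D, ((qf k T f) (blockElt (i:ℕ) (f i))).toReal = 1/((k:ℝ)*(T:ℝ)) := by
      intro i _
      rw [qf_apply hk hT, Gf_blockElt_self i, ENNReal.toReal_ofReal hkT.le]
    rw [Finset.sum_congr rfl heq, Finset.sum_const, nsmul_eq_mul]
  have hq2 : ((qf k T f).toMeasure ↑C2).toReal = 0 := by
    rw [toMeasure_finset_real, Finset.sum_image hinj2]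
    apply Finset.sum_eq_zero
    intro i _
    rw [qf_apply hk hT, Gf_blockElt_other i, ENNReal.ofReal_zero, ENNReal.toReal_zero]
  have hp12 : (p.toMeasure ↑C1).toReal ≤ (p.toMeasure ↑C2).toReal := by
    rw [toMeasure_finset_real, toMeasure_finset_real, Finset.sum_image hinj1,
      Finset.sum_image hinj2]
    apply Finset.sum_le_sum
    intro i hi
    exact est_le p (i:ℕ) (f i) ((mem_filter.mp hi).2)
  have h1 := abs_le_tv p (qf k T f) ↑C1
  have h2 := abs_le_tv p (qf k T f) ↑C2
  have h1' : ((qf k T f).toMeasure ↑C1).toReal - (p.toMeasure ↑C1).toReal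
      ≤ tv p (qf k T f) := by
    calc ((qf k T f).toMeasure ↑C1).toReal - (p.toMeasure ↑C1).toReal
        ≤ |((qf k T f).toMeasure ↑C1).toReal - (p.toMeasure ↑C1).toReal| := le_abs_self _
      _ = |(p.toMeasure ↑C1).toReal - ((qf k T f).toMeasure ↑C1).toReal| := abs_sub_comm _ _
      _ ≤ tv p (qf k T f) := h1
  have h2' : (p.toMeasure ↑C2).toReal - ((qf k T f).toMeasure ↑C2).toReal
      ≤ tv p (qf k T f) := le_trans (le_abs_self _) h2
  rw [hq1] at h1'
  rw [hq2, sub_zero] at h2'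
  linarith
/-! ### Flipping one bit -/

def flipf (i : Fin T) (f : Fin T → Bool) : Fin T → Bool := fun j => if j = i then !(f j) else f j

lemma flipf_invol (i : Fin T) : Function.Involutive (flipf (T := T) i) := by
  intro f; funext j; by_cases h : j = i <;> simp [flipf, h]

lemma flipf_self (i : Fin T) (f : Fin T → Bool) : flipf i f i = !f i := by simp [flipf]

lemma Afin_flip_mem (i : Fin T) {x : ℕ} (hx : x ∉ Bi (i:ℕ)) (f : Fin T → Bool)
    (hm : x ∈ Afin T (flipf i f)) : x ∈ Afin T f := by
  obtain ⟨j, hj⟩ := mem_Afin.mp hm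
  by_cases hji : j = i
  · subst hji
    exact absurd (hj ▸ blockElt_mem_Bi (j:ℕ) _) hx
  · have hfj : flipf i f j = f j := by simp [flipf, hji]
    rw [hfj] at hj
    exact mem_Afin.mpr ⟨j, hj⟩

lemma Gf_flip (i : Fin T) {x : ℕ} (hx : x ∉ Bi (i:ℕ)) (f : Fin T → Bool) :
    Gf k T (flipf i f) x = Gf k T f x := by
  have hiff : x ∈ Afin T (flipf i f) ↔ x ∈ Afin T f := by
    constructor
    · exact Afin_flip_mem i hx f
    · intro h
      have h2 := Afin_flip_mem i hx (flipf i f)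
      rw [flipf_invol i f] at h2
      exact h2 h
  unfold Gf
  by_cases hx0 : x = 0
  · simp [hx0]
  · rw [if_neg hx0, if_neg hx0]
    by_cases hm : x ∈ Afin T f
    · rw [if_pos (hiff.mpr hm), if_pos hm]
    · rw [if_neg (fun h => hm (hiff.mp h)), if_neg hm]

lemma w_flip (i : Fin T) {m : ℕ} {s : Fin m → ℕ} (hs : s ∈ Favoid m T (i:ℕ))
    (f : Fin T → Bool) :
    ∏ j, Gf k T (flipf i f) (s j) = ∏ j, Gf k T f (s j) := by
  apply Finset.prod_congr rfl
  intro j _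
  exact Gf_flip i (mem_sdiff.mp ((Fintype.mem_piFinset.mp hs) j)).2 f

/-! ### The pairing identity -/

lemma pairing (i : Fin T) (m : ℕ) (b : (Fin m → ℕ) → Bool) :
    ∑ f : Fin T → Bool, ∑ s ∈ Favoid m T (i:ℕ),
        (∏ j, Gf k T f (s j)) * (if b s ≠ f i then (1:ℝ) else 0)
      = (1/2) * ∑ f : Fin T → Bool, ∑ s ∈ Favoid m T (i:ℕ), ∏ j, Gf k T f (s j) := by
  set F : (Fin T → Bool) → ℝ := fun f => ∑ s ∈ Favoid m T (i:ℕ),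
      (∏ j, Gf k T f (s j)) * (if b s ≠ f i then (1:ℝ) else 0) with hF
  have hflip : ∑ f : Fin T → Bool, F (flipf i f) = ∑ f : Fin T → Bool, F f := by
    have := Equiv.sum_comp (Function.Involutive.toPerm _ (flipf_invol i)) F
    simpa using this
  have key : ∀ f : Fin T → Bool, F f + F (flipf i f)
      = ∑ s ∈ Favoid m T (i:ℕ), ∏ j, Gf k T f (s j) := by
    intro f
    rw [hF]
    simp only
    rw [← Finset.sum_add_distrib]
    apply Finset.sum_congr rfl
    intro s hs
    rw [w_flip i hs f, ← mul_add]
    have hb : (if b s ≠ f i then (1:ℝ) else 0)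
        + (if b s ≠ (flipf i f) i then (1:ℝ) else 0) = 1 := by
      rw [flipf_self]
      cases hbs : b s <;> cases hfi : f i <;> simp
    rw [hb, mul_one]
  have h2 : (2:ℝ) * ∑ f : Fin T → Bool, F f
      = ∑ f : Fin T → Bool, (F f + F (flipf i f)) := by
    rw [Finset.sum_add_distrib, hflip]; ring
  have h3 : ∑ f : Fin T → Bool, (F f + F (flipf i f))
      = ∑ f : Fin T → Bool, ∑ s ∈ Favoid m T (i:ℕ), ∏ j, Gf k T f (s j) :=
    Finset.sum_congr rfl fun f _ => key f
  rw [h3] at h2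
  linarith
/-! ### Per-coordinate lower bound -/

lemma card_bool_fun : (univ : Finset (Fin T → Bool)).card = 2^T := by
  simp [Finset.card_univ]

lemma per_i (hk : 1 ≤ k) (hT : 1 ≤ T) (m : ℕ) (i : Fin T) (b : (Fin m → ℕ) → Bool) :
    (2:ℝ)^T * ((1 - (m:ℝ)/(T:ℝ))/2) ≤
      ∑ f : Fin T → Bool, ∑ s ∈ Fsamp m T,
        (∏ j, Gf k T f (s j)) * (if b s ≠ f i then (1:ℝ) else 0) := by
  have hk1 : (1:ℝ) ≤ (k:ℝ) := by exact_mod_cast hk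
  have hT1 : (1:ℝ) ≤ (T:ℝ) := by exact_mod_cast hT
  have hkT1 : (1:ℝ) ≤ (k:ℝ)*(T:ℝ) := by nlinarith
  have hkT0 : (0:ℝ) < (k:ℝ)*(T:ℝ) := by linarith
  have hbern : 1 - (m:ℝ)/(T:ℝ) ≤ (1 - 1/((k:ℝ)*(T:ℝ)))^m := by
    have h1 : 1 + (m:ℝ) * (-(1/((k:ℝ)*(T:ℝ)))) ≤ (1 + (-(1/((k:ℝ)*(T:ℝ)))))^m := by
      apply one_add_mul_le_pow
      have h : 1/((k:ℝ)*(T:ℝ)) ≤ 1 := by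
        rw [div_le_one hkT0]; exact hkT1
      linarith
    have e1 : 1 + (m:ℝ) * (-(1/((k:ℝ)*(T:ℝ)))) = 1 - (m:ℝ)/((k:ℝ)*(T:ℝ)) := by ring
    have e2 : (1 + (-(1/((k:ℝ)*(T:ℝ))))) = 1 - 1/((k:ℝ)*(T:ℝ)) := by ring
    rw [e1, e2] at h1
    have h2 : (m:ℝ)/((k:ℝ)*(T:ℝ)) ≤ (m:ℝ)/(T:ℝ) :=
      div_le_div_of_nonneg_left (Nat.cast_nonneg m) (by linarith) (by nlinarith)
    linarith
  calc (2:ℝ)^T * ((1 - (m:ℝ)/(T:ℝ))/2)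
      ≤ (2:ℝ)^T * ((1 - 1/((k:ℝ)*(T:ℝ)))^m/2) := by
        apply mul_le_mul_of_nonneg_left (by linarith) (by positivity)
    _ = (1/2) * ∑ f : Fin T → Bool, ∑ s ∈ Favoid m T (i:ℕ), ∏ j, Gf k T f (s j) := by
        rw [Finset.sum_congr rfl (fun (f : Fin T → Bool) _ => sum_w_Favoid hk hT m i),
          Finset.sum_const, card_bool_fun, nsmul_eq_mul]
        push_cast
        ring
    _ = ∑ f : Fin T → Bool, ∑ s ∈ Favoid m T (i:ℕ),
          (∏ j, Gf k T f (s j)) * (if b s ≠ f i then (1:ℝ) else 0) := (pairing i m b).symm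
    _ ≤ ∑ f : Fin T → Bool, ∑ s ∈ Fsamp m T,
          (∏ j, Gf k T f (s j)) * (if b s ≠ f i then (1:ℝ) else 0) := by
        apply Finset.sum_le_sum
        intro f _
        apply Finset.sum_le_sum_of_subset_of_nonneg (Favoid_subset (i:ℕ))
        intro s _ _
        apply mul_nonneg (w_nonneg hk s)
        split_ifs <;> norm_num

/-! ### Master averaging lower bound -/

lemma master_lb (hk : 1 ≤ k) (hT : 1 ≤ T) (m : ℕ) (Alg : (Fin m → ℕ) → PMF ℕ) :
    (2:ℝ)^T * (1 - (m:ℝ)/(T:ℝ)) / (4*(k:ℝ)) ≤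
      ∑ f : Fin T → Bool, ∑ s ∈ Fsamp m T,
        (∏ j, Gf k T f (s j)) * tv (Alg s) (qf k T f) := by
  have hk1 : (1:ℝ) ≤ (k:ℝ) := by exact_mod_cast hk
  have hT1 : (1:ℝ) ≤ (T:ℝ) := by exact_mod_cast hT
  have hkT0 : (0:ℝ) < (k:ℝ)*(T:ℝ) := by nlinarith
  set X : ℝ := ∑ i : Fin T, ∑ f : Fin T → Bool, ∑ s ∈ Fsamp m T,
      (∏ j, Gf k T f (s j)) * (if est (Alg s) (i:ℕ) ≠ f i then (1:ℝ) else 0) with hXdef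
  have hX : (2:ℝ)^T * ((1 - (m:ℝ)/(T:ℝ))/2) * (T:ℝ) ≤ X := by
    have h := Finset.sum_le_sum (s := (univ : Finset (Fin T))) (f := fun _ : Fin T => (2:ℝ)^T * ((1 - (m:ℝ)/(T:ℝ))/2))
      (g := fun i : Fin T => ∑ f : Fin T → Bool, ∑ s ∈ Fsamp m T,
        (∏ j, Gf k T f (s j)) * (if est (Alg s) (i:ℕ) ≠ f i then (1:ℝ) else 0))
      (fun i _ => per_i hk hT m i (fun s => est (Alg s) (i:ℕ)))
    rw [Finset.sum_const, Finset.card_univ, Fintype.card_fin, nsmul_eq_mul] at h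
    calc (2:ℝ)^T * ((1 - (m:ℝ)/(T:ℝ))/2) * (T:ℝ)
        = (T:ℝ) * ((2:ℝ)^T * ((1 - (m:ℝ)/(T:ℝ))/2)) := by ring
      _ ≤ X := h
  have hswap : ∑ f : Fin T → Bool, ∑ s ∈ Fsamp m T, (∏ j, Gf k T f (s j)) *
      (∑ i : Fin T, (if est (Alg s) (i:ℕ) ≠ f i then (1:ℝ) else 0)) = X := by
    have h1 : ∀ f : Fin T → Bool, ∀ s : Fin m → ℕ,
        (∏ j, Gf k T f (s j)) * (∑ i : Fin T, (if est (Alg s) (i:ℕ) ≠ f i then (1:ℝ) else 0))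
        = ∑ i : Fin T, (∏ j, Gf k T f (s j)) * (if est (Alg s) (i:ℕ) ≠ f i then (1:ℝ) else 0) :=
      fun f s => Finset.mul_sum _ _ _
    simp_rw [h1]
    rw [hXdef]
    calc ∑ f : Fin T → Bool, ∑ s ∈ Fsamp m T, ∑ i : Fin T,
          (∏ j, Gf k T f (s j)) * (if est (Alg s) (i:ℕ) ≠ f i then (1:ℝ) else 0)
        = ∑ f : Fin T → Bool, ∑ i : Fin T, ∑ s ∈ Fsamp m T,
          (∏ j, Gf k T f (s j)) * (if est (Alg s) (i:ℕ) ≠ f i then (1:ℝ) else 0) :=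
          Finset.sum_congr rfl fun f _ => Finset.sum_comm
      _ = X := Finset.sum_comm
  have hptwise : ∀ f : Fin T → Bool, ∀ s : Fin m → ℕ,
      (∏ j, Gf k T f (s j)) * ((1/(2*((k:ℝ)*(T:ℝ)))) *
        (∑ i : Fin T, (if est (Alg s) (i:ℕ) ≠ f i then (1:ℝ) else 0)))
      ≤ (∏ j, Gf k T f (s j)) * tv (Alg s) (qf k T f) := by
    intro f s
    apply mul_le_mul_of_nonneg_left ?_ (w_nonneg hk s)
    have hcard : ((univ.filter fun i : Fin T => est (Alg s) (i:ℕ) ≠ f i).card : ℝ)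
        = ∑ i : Fin T, (if est (Alg s) (i:ℕ) ≠ f i then (1:ℝ) else 0) := by
      rw [Finset.card_filter]
      push_cast
      rfl
    have h := card_est_le hk hT f (Alg s)
    rw [hcard] at h
    set E := ∑ i : Fin T, (if est (Alg s) (i:ℕ) ≠ f i then (1:ℝ) else 0)
    have he : (1/(2*((k:ℝ)*(T:ℝ)))) * E = (E * (1/((k:ℝ)*(T:ℝ))))/2 := by ring
    rw [he]
    linarith
  calc (2:ℝ)^T * (1 - (m:ℝ)/(T:ℝ)) / (4*(k:ℝ))
      = (1/(2*((k:ℝ)*(T:ℝ)))) * ((2:ℝ)^T * ((1 - (m:ℝ)/(T:ℝ))/2) * (T:ℝ)) := by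
        field_simp
        ring
    _ ≤ (1/(2*((k:ℝ)*(T:ℝ)))) * X := by
        apply mul_le_mul_of_nonneg_left hX (by positivity)
    _ = ∑ f : Fin T → Bool, ∑ s ∈ Fsamp m T, (∏ j, Gf k T f (s j)) *
          ((1/(2*((k:ℝ)*(T:ℝ)))) * (∑ i : Fin T, (if est (Alg s) (i:ℕ) ≠ f i then (1:ℝ) else 0))) := by
        rw [← hswap, Finset.mul_sum]
        apply Finset.sum_congr rfl
        intro f _
        rw [Finset.mul_sum]
        apply Finset.sum_congr rfl
        intro s _
        ring
    _ ≤ ∑ f : Fin T → Bool, ∑ s ∈ Fsamp m T,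
          (∏ j, Gf k T f (s j)) * tv (Alg s) (qf k T f) :=
        Finset.sum_le_sum fun f _ => Finset.sum_le_sum fun s _ => hptwise f s
/-! ### Per-hypothesis upper bound -/

lemma W_le (hk : 1 ≤ k) (m : ℕ) (Alg : (Fin m → ℕ) → PMF ℕ) (f : Fin T → Bool)
    (hT : 1 ≤ T) (ε : ℝ) (hε : 0 ≤ ε) :
    ∑ s ∈ Fsamp m T, (∏ j, Gf k T f (s j)) * tv (Alg s) (qf k T f)
      ≤ ε + ∑ s ∈ (Fsamp m T).filter (fun s => ε < tv (Alg s) (qf k T f)),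
          ∏ j, Gf k T f (s j) := by
  rw [← Finset.sum_filter_add_sum_filter_not (Fsamp m T)
    (fun s => ε < tv (Alg s) (qf k T f))]
  have hbad : ∑ s ∈ (Fsamp m T).filter (fun s => ε < tv (Alg s) (qf k T f)),
      (∏ j, Gf k T f (s j)) * tv (Alg s) (qf k T f)
      ≤ ∑ s ∈ (Fsamp m T).filter (fun s => ε < tv (Alg s) (qf k T f)),
        ∏ j, Gf k T f (s j) := by
    apply Finset.sum_le_sum
    intro s _
    calc (∏ j, Gf k T f (s j)) * tv (Alg s) (qf k T f)
        ≤ (∏ j, Gf k T f (s j)) * 1 :=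
          mul_le_mul_of_nonneg_left (tv_le_one _ _) (w_nonneg hk s)
      _ = ∏ j, Gf k T f (s j) := mul_one _
  have hgood : ∑ s ∈ (Fsamp m T).filter (fun s => ¬ (ε < tv (Alg s) (qf k T f))),
      (∏ j, Gf k T f (s j)) * tv (Alg s) (qf k T f) ≤ ε := by
    have h1 : ∑ s ∈ (Fsamp m T).filter (fun s => ¬ (ε < tv (Alg s) (qf k T f))),
        (∏ j, Gf k T f (s j)) * tv (Alg s) (qf k T f)
        ≤ ∑ s ∈ (Fsamp m T).filter (fun s => ¬ (ε < tv (Alg s) (qf k T f))),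
          (∏ j, Gf k T f (s j)) * ε := by
      apply Finset.sum_le_sum
      intro s hs
      exact mul_le_mul_of_nonneg_left (not_lt.mp (mem_filter.mp hs).2) (w_nonneg hk s)
    have h2 : ∑ s ∈ (Fsamp m T).filter (fun s => ¬ (ε < tv (Alg s) (qf k T f))),
        (∏ j, Gf k T f (s j)) * ε
        = (∑ s ∈ (Fsamp m T).filter (fun s => ¬ (ε < tv (Alg s) (qf k T f))),
          ∏ j, Gf k T f (s j)) * ε := (Finset.sum_mul _ _ _).symm
    have h3 : ∑ s ∈ (Fsamp m T).filter (fun s => ¬ (ε < tv (Alg s) (qf k T f))),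
        ∏ j, Gf k T f (s j) ≤ 1 := by
      rw [← sum_w_Fsamp (f := f) hk hT m]
      apply Finset.sum_le_sum_of_subset_of_nonneg (Finset.filter_subset _ _)
      intro s _ _
      exact w_nonneg hk s
    have h4 : (0:ℝ) ≤ ∑ s ∈ (Fsamp m T).filter (fun s => ¬ (ε < tv (Alg s) (qf k T f))),
        ∏ j, Gf k T f (s j) := Finset.sum_nonneg fun s _ => w_nonneg hk s
    calc _ ≤ _ := h1
      _ = _ := h2
      _ ≤ 1 * ε := mul_le_mul_of_nonneg_right h3 hε
      _ = ε := one_mul ε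
  linarith

/-! ### The family and non-learnability -/

def Hfam : ℕ → Set (PMF ℕ) := fun k =>
  {q | ∃ T : ℕ, 1 ≤ T ∧ ∃ f : Fin T → Bool, q = qf k T f}

lemma not_pac (k : ℕ) (hk : 1 ≤ k) :
    ¬ ∃ A mQ, RealizablePAC (Hfam k) A mQ := by
  rintro ⟨Alg, mQ, h⟩
  have hk1 : (1:ℝ) ≤ (k:ℝ) := by exact_mod_cast hk
  set ε : ℝ := 1/(16*(k:ℝ)) with hεdef
  set δ : ℝ := 1/(17*(k:ℝ)) with hδdef
  have hε0 : 0 < ε := by rw [hεdef]; positivity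
  have hε1 : ε < 1 := by
    rw [hεdef, div_lt_one (by positivity)]; nlinarith
  have hδ0 : 0 < δ := by rw [hδdef]; positivity
  have hδ1 : δ < 1 := by
    rw [hδdef, div_lt_one (by positivity)]; nlinarith
  set m := mQ ε δ with hmdef
  set T := 2*(m+1) with hTdef
  have hT : 1 ≤ T := by omega
  have hT1 : (1:ℝ) ≤ (T:ℝ) := by exact_mod_cast hT
  set Sbad : (Fin T → Bool) → ℝ := fun f =>
    ∑ s ∈ (Fsamp m T).filter (fun s => ε < tv (Alg m s) (qf k T f)),
      ∏ j, Gf k T f (s j) with hSbaddef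
  -- extract a bad hypothesis
  have hhalf : (1:ℝ)/2 ≤ 1 - (m:ℝ)/(T:ℝ) := by
    have hTc : (T:ℝ) = 2*(m:ℝ)+2 := by rw [hTdef]; push_cast; ring
    rw [hTc]
    have hmT : (m:ℝ)/(2*(m:ℝ)+2) ≤ 1/2 := by
      rw [div_le_div_iff₀ (by positivity) (by norm_num)]
      nlinarith [Nat.cast_nonneg (α := ℝ) m]
    linarith
  have hPpos : (0:ℝ) < (2:ℝ)^T := by positivity
  have hstep : (2:ℝ)^T/(8*(k:ℝ)) ≤ (2:ℝ)^T * (1 - (m:ℝ)/(T:ℝ))/(4*(k:ℝ)) := by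
    rw [div_le_div_iff₀ (by positivity) (by positivity)]
    nlinarith [mul_le_mul_of_nonneg_left hhalf
      (by positivity : (0:ℝ) ≤ 8*(k:ℝ)*(2:ℝ)^T)]
  have hub : ∑ f : Fin T → Bool,
      (∑ s ∈ Fsamp m T, (∏ j, Gf k T f (s j)) * tv (Alg m s) (qf k T f))
      ≤ ∑ f : Fin T → Bool, (ε + Sbad f) :=
    Finset.sum_le_sum fun f _ => W_le hk m (Alg m) f hT ε hε0.le
  have hlb := master_lb hk hT m (Alg m)
  have hsplit : ∑ f : Fin T → Bool, (ε + Sbad f)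
      = (2:ℝ)^T * ε + ∑ f : Fin T → Bool, Sbad f := by
    rw [Finset.sum_add_distrib, Finset.sum_const, card_bool_fun, nsmul_eq_mul]
    push_cast
    ring
  have harith : (2:ℝ)^T/(8*(k:ℝ)) - (2:ℝ)^T * ε = (2:ℝ)^T * (1/(16*(k:ℝ))) := by
    rw [hεdef]
    field_simp
    ring
  have hsumbad : (2:ℝ)^T * (1/(16*(k:ℝ))) ≤ ∑ f : Fin T → Bool, Sbad f := by
    rw [hsplit] at hub
    linarith
  have hex : ∃ f : Fin T → Bool, 1/(16*(k:ℝ)) ≤ Sbad f := by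
    by_contra hcon
    push_neg at hcon
    have hlt := Finset.sum_lt_sum_of_nonempty (Finset.univ_nonempty)
      (fun f _ => hcon f)
    rw [Finset.sum_const, card_bool_fun, nsmul_eq_mul] at hlt
    push_cast at hlt
    linarith
  obtain ⟨f, hf⟩ := hex
  -- apply the PAC guarantee
  have hmem : qf k T f ∈ Hfam k := ⟨T, hT, f, rfl⟩
  have hpac := h ε δ hε0 hε1 hδ0 hδ1 (qf k T f) hmem m (le_refl m)
  -- lower bound the failure probability
  have hlow : ENNReal.ofReal (Sbad f)
      ≤ iidSample (qf k T f) m {S | ε < tv (Alg m S) (qf k T f)} := by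
    rw [hSbaddef]
    simp only
    rw [ENNReal.ofReal_sum_of_nonneg (fun s _ => w_nonneg hk s)]
    have heq : ∀ s ∈ (Fsamp m T).filter (fun s => ε < tv (Alg m s) (qf k T f)),
        ENNReal.ofReal (∏ j, Gf k T f (s j)) = ∏ j, (qf k T f) (s j) := by
      intro s _
      rw [ENNReal.ofReal_prod_of_nonneg (fun j _ => Gf_nonneg hk _)]
      exact Finset.prod_congr rfl fun j _ => (qf_apply hk hT (s j)).symm
    rw [Finset.sum_congr rfl heq]
    apply le_iid
    intro s hs
    exact (Finset.mem_filter.mp (Finset.mem_coe.mp hs)).2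
  have hfinal : (1:ℝ)/(16*(k:ℝ)) ≤ δ := by
    have h1 : ENNReal.ofReal (1/(16*(k:ℝ))) ≤ ENNReal.ofReal δ :=
      le_trans (ENNReal.ofReal_le_ofReal hf) (le_trans hlow hpac)
    exact (ENNReal.ofReal_le_ofReal_iff hδ0.le).mp h1
  rw [hδdef, div_le_div_iff₀ (by positivity) (by positivity)] at hfinal
  nlinarith
/-! ### Learnability of the singleton class -/

lemma learn_pure : RealizablePAC {PMF.pure 0} (fun _ _ => PMF.pure 0) (fun _ _ => 0) := by
  intro ε δ hε0 _ hδ0 _ q hq m _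
  rw [Set.mem_singleton_iff] at hq
  subst hq
  have hempty : {S : Fin m → ℕ | ε < tv (PMF.pure 0) (PMF.pure 0)} = ∅ := by
    ext S
    simp [tv_self, not_lt.mpr hε0.le]
  rw [hempty, measure_empty]
  exact zero_le

/-! ### Approximation by the point mass -/

lemma tv_pure_le (hk : 1 ≤ k) {q : PMF ℕ} (hq : q ∈ Hfam k) :
    tv (PMF.pure 0) q ≤ 1/(k:ℝ) := by
  obtain ⟨T, hT, f, rfl⟩ := hq
  have hk1 : (1:ℝ) ≤ (k:ℝ) := by exact_mod_cast hk
  have hηnn : (0:ℝ) ≤ 1/(k:ℝ) := by positivity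
  have hηle : 1/(k:ℝ) ≤ 1 := one_div_k_le_one hk
  apply ciSup_le
  intro C
  have hμ0 : (qf k T f).toMeasure {0} = ENNReal.ofReal (1 - 1/(k:ℝ)) := by
    rw [PMF.toMeasure_apply_singleton _ _ (measurableSet_singleton 0), qf_apply hk hT, Gf_zero]
  by_cases h0 : (0:ℕ) ∈ C
  · have h1 : ENNReal.ofReal (1 - 1/(k:ℝ)) ≤ (qf k T f).toMeasure C := by
      rw [← hμ0]
      exact measure_mono (Set.singleton_subset_iff.mpr h0)
    have h2 : 1 - 1/(k:ℝ) ≤ ((qf k T f).toMeasure C).toReal := by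
      have := ENNReal.toReal_mono (measure_ne_top _ _) h1
      rwa [ENNReal.toReal_ofReal (by linarith)] at this
    have h3 : ((qf k T f).toMeasure C).toReal ≤ 1 := meas_toReal_le_one _ _
    have h4 : ((PMF.pure 0 : PMF ℕ).toMeasure C).toReal = 1 := by
      rw [PMF.toMeasure_pure_apply _ _ (by trivial : MeasurableSet C), if_pos h0]
      simp
    rw [h4, abs_sub_le_iff]
    constructor <;> linarith
  · have hsub : C ⊆ ({0} : Set ℕ)ᶜ := fun x hx => by
      simp only [Set.mem_compl_iff, Set.mem_singleton_iff]
      rintro rfl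
      exact h0 hx
    have hcompl : (qf k T f).toMeasure ({0} : Set ℕ)ᶜ = ENNReal.ofReal (1/(k:ℝ)) := by
      rw [measure_compl (measurableSet_singleton 0) (measure_ne_top _ _), hμ0, measure_univ]
      rw [show (1:ENNReal) = ENNReal.ofReal 1 from ENNReal.ofReal_one.symm,
        ← ENNReal.ofReal_sub 1 (by linarith)]
      congr 1
      ring
    have h1 : ((qf k T f).toMeasure C).toReal ≤ 1/(k:ℝ) := by
      have hle : (qf k T f).toMeasure C ≤ ENNReal.ofReal (1/(k:ℝ)) :=
        hcompl ▸ measure_mono hsub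
      have := ENNReal.toReal_mono ENNReal.ofReal_ne_top hle
      rwa [ENNReal.toReal_ofReal hηnn] at this
    have h4 : ((PMF.pure 0 : PMF ℕ).toMeasure C).toReal = 0 := by
      rw [PMF.toMeasure_pure_apply _ _ (by trivial : MeasurableSet C), if_neg h0]
      simp
    rw [h4, zero_sub, abs_neg, abs_of_nonneg ENNReal.toReal_nonneg]
    exact h1

end
end NFL

/-- There is a countable family `H k` of classes of distributions over `ℕ`
such that `H₀ = {δ₀}` is learnable, no `H k` is PAC learnable in TV distance,
every `q ∈ H k` satisfies `tv δ₀ q ≤ 1/k` (so `{δ₀}` is a `1/k`-approximation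
of `H k`), and `1/k → 0`. -/
theorem exists_unlearnable_classes_approximated_by_point_mass :
    ∃ H : ℕ → Set (PMF ℕ),
      (∃ A mQ, RealizablePAC {PMF.pure 0} A mQ) ∧
      (∀ k : ℕ, 1 ≤ k → ¬ ∃ A mQ, RealizablePAC (H k) A mQ) ∧
      (∀ k : ℕ, 1 ≤ k → ∀ q ∈ H k, tv (PMF.pure 0) q ≤ 1 / (k : ℝ)) ∧
      Filter.Tendsto (fun k : ℕ => 1 / (k : ℝ)) Filter.atTop (nhds 0) := by
  refine ⟨NFL.Hfam, ⟨_, _, NFL.learn_pure⟩, fun k hk => NFL.not_pac k hk,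
    fun k hk q hq => NFL.tv_pure_le hk hq, tendsto_one_div_atTop_nhds_zero_nat⟩
end
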